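/- arXiv:0802.2862 — 4 statements merged into one kernel-verified Lean document; each statement's English description precedes it below -/
import Mathlib

section
/- There is a single first-order formula φ(x) with one free variable, over the language with binary relation symbols ⊑ (prefix order of the iteration) and ≤̂ (lifted tree order), unary relation symbols root̂ (lifted root predicate) and clone, and a constant for the empty sequence, such that for EVERY tree (T, ≤, r) (viewed as a structure with the binary relation ≤ and the unary predicate {r}) and every node t ∈ T: the infinitary Muchnik iteration (T^∞, clone) satisfies φ at the one-element sequence [t] if and only if there is a strictly increasing function f : ℕ → T with f 0 = t (i.e., t lies on an infinite branch of T). (Core of the lemma that the set U of nodes on infinite branches is uniformly first-order definable in the infinitary Muchnik iteration.) -/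
open FirstOrder

namespace Paper

/-- Extra relations for the (weak-)MSO companion: a sort predicate and a membership relation. -/
inductive MSORel : ℕ → Type
  | sort : MSORel 1
  | mem : MSORel 2

/-- The companion language: the relations of `L` together with a unary sort predicate
and a binary membership relation. -/
def msoLang (L : Language) : Language where
  Functions := L.Functions
  Relations n := L.Relations n ⊕ MSORel n

/-- A language whose only function symbols are constants. -/
class ConstOnly (L : Language) : Prop where
  isEmpty : ∀ n, IsEmpty (L.Functions (n + 1))

instance (L : Language) [L.IsRelational] : ConstOnly L := ⟨fun _ => inferInstance⟩

/-- The weak-MSO companion structure of an `L`-structure `M`: the universe is `M ⊕ Finset M`. -/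
def msoStructure (L : Language) (M : Type) [L.Structure M] [ConstOnly L] :
    (msoLang L).Structure (M ⊕ Finset M) where
  funMap {n} f := match n, f with
    | 0, f => fun _ => Sum.inl (Language.Structure.funMap (L := L) (M := M) f fun i => i.elim0)
    | _ + 1, f => (ConstOnly.isEmpty (L := L) _).elim f
  RelMap {n} r := match n, r with
    | _, Sum.inl R => fun x => ∃ y, x = Sum.inl ∘ y ∧ Language.Structure.RelMap (L := L) R y
    | 1, Sum.inr MSORel.sort => fun x => ∃ a, x 0 = Sum.inl a
    | 2, Sum.inr MSORel.mem => fun x => ∃ a S, x 0 = Sum.inl a ∧ x 1 = Sum.inr S ∧ a ∈ S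

instance msoStructureInst (L : Language) (M : Type) [L.Structure M] [ConstOnly L] :
    (msoLang L).Structure (M ⊕ Finset M) := msoStructure L M

/-- The companion structure with second sort ranging over the sets satisfying `P`. -/
def setCompanion (L : Language) (M : Type) [L.Structure M] [ConstOnly L] (P : Set M → Prop) :
    (msoLang L).Structure (M ⊕ {S : Set M // P S}) where
  funMap {n} f := match n, f with
    | 0, f => fun _ => Sum.inl (Language.Structure.funMap (L := L) (M := M) f fun i => i.elim0)
    | _ + 1, f => (ConstOnly.isEmpty (L := L) _).elim f
  RelMap {n} r := match n, r with
    | _, Sum.inl R => fun x => ∃ y, x = Sum.inl ∘ y ∧ Language.Structure.RelMap (L := L) R y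
    | 1, Sum.inr MSORel.sort => fun x => ∃ a, x 0 = Sum.inl a
    | 2, Sum.inr MSORel.mem => fun x => ∃ a S, x 0 = Sum.inl a ∧ x 1 = Sum.inr S ∧ a ∈ S.val

instance setCompanionInst (L : Language) (M : Type) [L.Structure M] [ConstOnly L]
    (P : Set M → Prop) : (msoLang L).Structure (M ⊕ {S : Set M // P S}) :=
  setCompanion L M P

/-- Extra symbols for the Shelah-Stupp iteration: the prefix order. -/
inductive IterRel : ℕ → Type
  | pre : IterRel 2

/-- The language of the Shelah-Stupp iteration: lifted relations of `L`,
a binary prefix order, and a constant (for the empty word). -/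
def iterLang (L : Language) : Language where
  Functions n := match n with
    | 0 => Unit
    | _ + 1 => Empty
  Relations n := L.Relations n ⊕ IterRel n

instance (L : Language) : ConstOnly (iterLang L) := ⟨fun _ => inferInstanceAs (IsEmpty Empty)⟩

/-- The Shelah-Stupp iteration `𝔄*` of an `L`-structure `A`: the universe is `List A`,
with the prefix order, the lifted relations and the empty word as constant. -/
instance iterStructure (L : Language) (A : Type) [L.Structure A] :
    (iterLang L).Structure (List A) where
  funMap {n} f := match n, f with
    | 0, _ => fun _ => ([] : List A)
    | _ + 1, f => f.elim
  RelMap {n} r := match n, r with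
    | _, Sum.inl R => fun x =>
        ∃ (u : List A) (y : Fin _ → A), (∀ i, x i = u ++ [y i]) ∧ Language.Structure.RelMap (L := L) R y
    | 2, Sum.inr IterRel.pre => fun x => x 0 <+: x 1

end Paper
namespace Paper

/-- The language of trees: a binary order relation and a unary root predicate. -/
inductive TreeRel : ℕ → Type
  | le : TreeRel 2
  | root : TreeRel 1

/-- The language of trees. -/
def treeLang : Language where
  Functions _ := Empty
  Relations := TreeRel

instance : treeLang.IsRelational := fun _ => inferInstanceAs (IsEmpty Empty)

/-- A set of words, viewed as a tree-structure with the prefix relation and the root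
predicate holding exactly at the empty word. -/
instance prefixTreeStructure {α : Type} (T : Set (List α)) : treeLang.Structure ↥T where
  funMap f := f.elim
  RelMap {n} r := match n, r with
    | 2, TreeRel.le => fun x => (x 0).val <+: (x 1).val
    | 1, TreeRel.root => fun x => (x 0).val = []

/-- Extra relations for the Muchnik iteration: the prefix order of the iteration
and the clone predicate. -/
inductive MuchRel : ℕ → Type
  | pre : MuchRel 2
  | clone : MuchRel 1

/-- The language of the Muchnik iteration: the lifted relations of `L`, the prefix order,
the clone predicate, and a constant (for the empty sequence). -/
def muchLang (L : Language) : Language where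
  Functions n := match n with
    | 0 => Unit
    | _ + 1 => Empty
  Relations n := L.Relations n ⊕ MuchRel n

instance (L : Language) : ConstOnly (muchLang L) := ⟨fun _ => inferInstanceAs (IsEmpty Empty)⟩

/-- The prefix relation on finite and infinite sequences. -/
def InfPrefix {A : Type} : (List A ⊕ (ℕ → A)) → (List A ⊕ (ℕ → A)) → Prop
  | Sum.inl u, Sum.inl v => u <+: v
  | Sum.inl u, Sum.inr s => ∀ i : Fin u.length, u.get i = s i
  | Sum.inr _, Sum.inl _ => False
  | Sum.inr s, Sum.inr s' => s = s'

/-- The infinitary Muchnik iteration `(𝔄^∞, clone)` of an `L`-structure `A`: the universe is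
`List A ⊕ (ℕ → A)` (finite and infinite sequences over `A`), with the prefix relation, the
lifted relations, the empty sequence as constant, and the clone predicate. -/
instance muchInfStructure (L : Language) (A : Type) [L.Structure A] :
    (muchLang L).Structure (List A ⊕ (ℕ → A)) where
  funMap {n} f := match n, f with
    | 0, _ => fun _ => (Sum.inl [] : List A ⊕ (ℕ → A))
    | _ + 1, f => f.elim
  RelMap {n} r := match n, r with
    | _, Sum.inl R => fun x => ∃ (u : List A) (y : Fin _ → A),
        (∀ i, x i = Sum.inl (u ++ [y i])) ∧ Language.Structure.RelMap (L := L) R y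
    | 2, Sum.inr MuchRel.pre => fun x => InfPrefix (x 0) (x 1)
    | 1, Sum.inr MuchRel.clone => fun x => ∃ (u : List A) (c : A), x 0 = Sum.inl (u ++ [c, c])

/-- The tree `T_ω`: all words over `ℕ × ℕ` whose sequence of second components is strictly
decreasing. -/
def Tomega : Set (List (ℕ × ℕ)) := {w | List.Chain' (· > ·) (w.map Prod.snd)}

end Paper

namespace Paper

/-- A tree is a partial order with a least element (the root) in which every
principal downset is finite and linearly ordered. -/
structure IsTree (V : Type) [PartialOrder V] [OrderBot V] : Prop where
  finite_below : ∀ v : V, {u : V | u ≤ v}.Finite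
  linear_below : ∀ v u w : V, u ≤ v → w ≤ v → u ≤ w ∨ w ≤ u

/-- A partial order with a least element, viewed as a structure for the tree language. -/
instance orderTreeStructure (V : Type) [PartialOrder V] [OrderBot V] :
    treeLang.Structure V where
  funMap f := f.elim
  RelMap {n} r := match n, r with
    | 2, TreeRel.le => fun x => x 0 ≤ x 1
    | 1, TreeRel.root => fun x => x 0 = ⊥


section InfiniteBranch

open Language BoundedFormula

/-- Abbreviation for the language of the Muchnik iteration of trees. -/
private abbrev ML' := muchLang treeLang

private def preF {n} (t₁ t₂ : ML'.Term (Fin 1 ⊕ Fin n)) : ML'.BoundedFormula (Fin 1) n :=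
  Relations.boundedFormula₂ (Sum.inr MuchRel.pre) t₁ t₂

private def cloneF {n} (t : ML'.Term (Fin 1 ⊕ Fin n)) : ML'.BoundedFormula (Fin 1) n :=
  Relations.boundedFormula₁ (Sum.inr MuchRel.clone) t

private def leF {n} (t₁ t₂ : ML'.Term (Fin 1 ⊕ Fin n)) : ML'.BoundedFormula (Fin 1) n :=
  Relations.boundedFormula₂ (Sum.inl TreeRel.le) t₁ t₂

private def xv {n} : ML'.Term (Fin 1 ⊕ Fin n) := Term.var (Sum.inl 0)

/-- The formula asserting the existence of an infinite branch through the given node. -/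
private def branchFormula : ML'.Formula (Fin 1) :=
  BoundedFormula.ex (
    ((∀' (preF &0 &1 ⟹ Term.bdEqual &1 &0)) ⊓
    preF xv &0) ⊓
    (∀' ((((preF xv &1 ⊓ ∼(Term.bdEqual &1 xv)) ⊓ preF &1 &0) ⊓ ∼(Term.bdEqual &1 &0)) ⟹
       (∼(cloneF &1) ⊓ BoundedFormula.ex (cloneF &2 ⊓ leF &2 &1)))))

private lemma snoc1_0 {M : Type*} (d : Fin 0 → M) (a : M) :
    Fin.snoc (α := fun _ => M) d a 0 = a := rfl
private lemma snoc2_0 {M : Type*} (d : Fin 0 → M) (a b : M) :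
    Fin.snoc (α := fun _ => M) (Fin.snoc (α := fun _ => M) d a) b 0 = a := rfl
private lemma snoc2_1 {M : Type*} (d : Fin 0 → M) (a b : M) :
    Fin.snoc (α := fun _ => M) (Fin.snoc (α := fun _ => M) d a) b 1 = b := rfl
private lemma snoc3_0 {M : Type*} (d : Fin 0 → M) (a b c : M) :
    Fin.snoc (α := fun _ => M)
      (Fin.snoc (α := fun _ => M) (Fin.snoc (α := fun _ => M) d a) b) c 0 = a := rfl
private lemma snoc3_1 {M : Type*} (d : Fin 0 → M) (a b c : M) :
    Fin.snoc (α := fun _ => M)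
      (Fin.snoc (α := fun _ => M) (Fin.snoc (α := fun _ => M) d a) b) c 1 = b := rfl
private lemma snoc3_2 {M : Type*} (d : Fin 0 → M) (a b c : M) :
    Fin.snoc (α := fun _ => M)
      (Fin.snoc (α := fun _ => M) (Fin.snoc (α := fun _ => M) d a) b) c 2 = c := rfl

variable {T : Type} [PartialOrder T] [OrderBot T]

/-- The clone predicate, unfolded. -/
private def Clo {A : Type} (q : List A ⊕ (ℕ → A)) : Prop := ∃ u c, q = Sum.inl (u ++ [c, c])

/-- The lifted order relation, unfolded. -/
private def LLe (w q : List T ⊕ (ℕ → T)) : Prop :=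
  ∃ (u : List T) (a b : T), w = Sum.inl (u ++ [a]) ∧ q = Sum.inl (u ++ [b]) ∧ a ≤ b

private lemma relMap_pre (a b : List T ⊕ (ℕ → T)) :
    Language.Structure.RelMap (L := ML') (M := List T ⊕ (ℕ → T))
      (Sum.inr MuchRel.pre) ![a, b] ↔ InfPrefix a b := Iff.rfl

private lemma relMap_clone (a : List T ⊕ (ℕ → T)) :
    Language.Structure.RelMap (L := ML') (M := List T ⊕ (ℕ → T))
      (Sum.inr MuchRel.clone) ![a] ↔ Clo a := Iff.rfl

private lemma relMap_le (a b : List T ⊕ (ℕ → T)) :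
    Language.Structure.RelMap (L := ML') (M := List T ⊕ (ℕ → T))
      (Sum.inl TreeRel.le) ![a, b] ↔ LLe a b := by
  constructor
  · rintro ⟨u, y, h, hle⟩
    exact ⟨u, y 0, y 1, h 0, h 1, hle⟩
  · rintro ⟨u, a', b', ha, hb, hle⟩
    refine ⟨u, ![a', b'], fun i => ?_, hle⟩
    fin_cases i <;> simpa

private lemma realize_preF {n} (t₁ t₂ : ML'.Term (Fin 1 ⊕ Fin n)) (v : Fin 1 → List T ⊕ (ℕ → T))
    (xs : Fin n → List T ⊕ (ℕ → T)) :
    (preF t₁ t₂).Realize v xs ↔ InfPrefix (t₁.realize (Sum.elim v xs)) (t₂.realize (Sum.elim v xs)) :=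
  Iff.rfl

private lemma realize_cloneF {n} (t : ML'.Term (Fin 1 ⊕ Fin n)) (v : Fin 1 → List T ⊕ (ℕ → T))
    (xs : Fin n → List T ⊕ (ℕ → T)) :
    (cloneF t).Realize v xs ↔ Clo (t.realize (Sum.elim v xs)) :=
  Iff.rfl

private lemma realize_leF {n} (t₁ t₂ : ML'.Term (Fin 1 ⊕ Fin n)) (v : Fin 1 → List T ⊕ (ℕ → T))
    (xs : Fin n → List T ⊕ (ℕ → T)) :
    (leF t₁ t₂).Realize v xs ↔ LLe (t₁.realize (Sum.elim v xs)) (t₂.realize (Sum.elim v xs)) := by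
  rw [← relMap_le]
  constructor
  · rintro ⟨u, y, h, hle⟩
    exact ⟨u, y, fun i => by fin_cases i; exacts [h 0, h 1], hle⟩
  · rintro ⟨u, y, h, hle⟩
    exact ⟨u, y, fun i => by fin_cases i; exacts [h 0, h 1], hle⟩

private lemma concat_inj {A : Type} {l₁ l₂ : List A} {a b : A} (h : l₁ ++ [a] = l₂ ++ [b]) :
    l₁ = l₂ ∧ a = b := by
  obtain ⟨h1, h2⟩ := List.append_inj' h rfl
  exact ⟨h1, by simpa using h2⟩

private def ofn {A : Type} (s : ℕ → A) (m : ℕ) : List A := List.ofFn (fun i : Fin m => s i)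

private lemma ofn_snoc {A : Type} (s : ℕ → A) (m : ℕ) : ofn s (m+1) = ofn s m ++ [s m] := by
  rw [ofn, List.ofFn_succ']
  simp [ofn, List.concat_eq_append, Fin.castSucc]

private lemma ofn_length {A : Type} (s : ℕ → A) (m : ℕ) : (ofn s m).length = m := by simp [ofn]

omit [PartialOrder T] [OrderBot T] in
private lemma IP_ofn (s : ℕ → T) (m : ℕ) : InfPrefix (Sum.inl (ofn s m)) (Sum.inr s) := by
  intro i
  rcases i with ⟨i, hi⟩
  simp [ofn]

private theorem branch_core (t : T) :
    (∃ y, ((∀ z, InfPrefix y z → z = y) ∧ InfPrefix (Sum.inl [t]) y) ∧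
      ∀ q, (((InfPrefix (Sum.inl [t]) q ∧ ¬ q = Sum.inl [t]) ∧ InfPrefix q y) ∧ ¬ q = y) →
        ¬ Clo q ∧ ∃ w, Clo w ∧ LLe w q) ↔
    ∃ f : ℕ → T, StrictMono f ∧ f 0 = t := by
  constructor
  · rintro ⟨y, ⟨h1, h2⟩, h3⟩
    obtain ⟨s, rfl⟩ : ∃ s, y = Sum.inr s := by
      cases y with
      | inl v =>
        have := h1 (Sum.inl (v ++ [⊥])) ⟨[⊥], rfl⟩
        simp at this
      | inr s => exact ⟨s, rfl⟩
    have hs0 : s 0 = t := (h2 ⟨0, by simp⟩).symm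
    refine ⟨s, strictMono_nat_of_lt_succ fun n => ?_, hs0⟩
    have hsplit : ofn s (n+2) = (ofn s n ++ [s n]) ++ [s (n+1)] := by
      rw [ofn_snoc, ofn_snoc]
    have hcond : (((InfPrefix (Sum.inl [t]) (Sum.inl (ofn s (n+2))) ∧
          ¬ (Sum.inl (ofn s (n+2)) : List T ⊕ (ℕ → T)) = Sum.inl [t]) ∧
        InfPrefix (Sum.inl (ofn s (n+2))) (Sum.inr s)) ∧
        ¬ (Sum.inl (ofn s (n+2)) : List T ⊕ (ℕ → T)) = Sum.inr s) := by
      refine ⟨⟨⟨?_, ?_⟩, IP_ofn s (n+2)⟩, by simp⟩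
      · show [t] <+: ofn s (n+2)
        have h0 : ofn s (n+2) = t :: List.ofFn (fun i : Fin (n+1) => s (i+1)) := by
          rw [ofn, List.ofFn_succ]
          simp [hs0]
        rw [h0]
        exact ⟨_, rfl⟩
      · intro h
        have := congrArg (fun x => Sum.elim List.length (fun _ => 0) x) h
        simp [ofn_length] at this
    obtain ⟨hnc, w, ⟨u, c, rfl⟩, u', a, b, hw2, hq2, hab⟩ := h3 _ hcond
    have hthis : u ++ [c, c] = u' ++ [a] := Sum.inl.inj hw2
    have hw2' : u' ++ [a] = (u ++ [c]) ++ [c] := by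
      rw [List.append_assoc]
      exact hthis.symm
    obtain ⟨hu', rfl⟩ := concat_inj hw2'
    have hq2' : (ofn s n ++ [s n]) ++ [s (n+1)] = u' ++ [b] := by
      rw [← hsplit]
      exact Sum.inl.inj hq2
    obtain ⟨h5, h6⟩ := concat_inj hq2'
    rw [hu'] at h5
    obtain ⟨-, h7⟩ := concat_inj h5.symm
    have hle : s n ≤ s (n+1) := by rw [← h7, h6]; exact hab
    rcases lt_or_eq_of_le hle with h | h
    · exact h
    · exact absurd (⟨ofn s n, s n, by rw [hsplit, h, List.append_assoc]; rfl⟩ : Clo _) hnc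
  · rintro ⟨f, hf, rfl⟩
    refine ⟨Sum.inr f, ⟨?_, ?_⟩, ?_⟩
    · rintro (z | z) hz
      · exact absurd hz id
      · exact congrArg Sum.inr hz.symm
    · intro i
      have h0 : (i : ℕ) = 0 := Nat.lt_one_iff.mp (by simpa using i.isLt)
      simp [h0]
    · rintro (v | s') ⟨⟨⟨hp, hne⟩, hpy⟩, hney⟩
      · have hget : ∀ i : Fin v.length, v.get i = f i := hpy
        have hlen1 : 1 ≤ v.length := hp.length_le
        have hlen2 : 2 ≤ v.length := by
          by_contra h
          have hl1 : v.length = 1 := by omega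
          apply hne
          have hv1 : v = [f 0] := by
            apply List.ext_get (by simp [hl1])
            intro i h1 h2
            simp only [List.length_singleton] at h2
            have : i = 0 := by omega
            subst this
            rw [hget ⟨0, h1⟩]
            simp
          rw [hv1]
        obtain ⟨n, hn⟩ : ∃ n, v.length = n + 2 := ⟨v.length - 2, by omega⟩
        have hvof : v = ofn f (n+2) := by
          apply List.ext_get (by simp [hn, ofn_length])
          intro i h1 h2
          rw [hget ⟨i, h1⟩]
          simp only [ofn, List.get_eq_getElem, List.getElem_ofFn]
        have hsplit : v = (ofn f n ++ [f n]) ++ [f (n+1)] := by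
          rw [hvof, ofn_snoc, ofn_snoc]
        constructor
        · rintro ⟨u, c, hc⟩
          have hc' : (u ++ [c]) ++ [c] = (ofn f n ++ [f n]) ++ [f (n+1)] := by
            rw [← hsplit, List.append_assoc]
            exact (Sum.inl.inj hc).symm
          obtain ⟨h5, h6⟩ := concat_inj hc'
          obtain ⟨-, h7⟩ := concat_inj h5
          exact absurd (h7.symm.trans h6) (hf (Nat.lt_succ_self n)).ne
        · exact ⟨Sum.inl ((ofn f n ++ [f n]) ++ [f n]),
            ⟨ofn f n, f n, by rw [List.append_assoc]; rfl⟩,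
            ofn f n ++ [f n], f n, f (n+1), rfl, by rw [hsplit], (hf (by omega)).le⟩
      · exact absurd (congrArg Sum.inr hpy) hney

end InfiniteBranch

/-- there is a single first-order formula `φ(x)` over the language of the
infinitary Muchnik iteration of trees such that for every tree `T` and every node `t : T`,
`φ` holds at the one-element sequence `[t]` in `(T^∞, clone)` iff `t` lies on an infinite
branch of `T`. -/
theorem infinite_branch_uniformly_definable :
    ∃ φ : (muchLang treeLang).Formula (Fin 1),
      ∀ (T : Type) [PartialOrder T] [OrderBot T], IsTree T →
        ∀ t : T,
          (φ.Realize (fun _ => (Sum.inl [t] : List T ⊕ (ℕ → T))) ↔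
            ∃ f : ℕ → T, StrictMono f ∧ f 0 = t) := by
  refine ⟨branchFormula, ?_⟩
  intro T _ _ _ t
  rw [show (fun _ => (Sum.inl [t] : List T ⊕ (ℕ → T))) = (fun _ : Fin 1 => (Sum.inl [t] : List T ⊕ (ℕ → T))) from rfl]
  rw [← branch_core t]
  simp only [branchFormula, realize_preF, realize_cloneF, realize_leF, xv, Language.Formula.Realize,
    Language.BoundedFormula.realize_ex, Language.BoundedFormula.realize_all,
    Language.BoundedFormula.realize_inf, Language.BoundedFormula.realize_imp,
    Language.BoundedFormula.realize_not, Language.BoundedFormula.realize_bdEqual,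
    Language.BoundedFormula.realize_rel₂, Language.BoundedFormula.realize_rel₁,
    Language.Term.realize_var, Function.comp, Sum.elim_inl,
    Sum.elim_inr, snoc1_0, snoc2_0, snoc2_1, snoc3_0, snoc3_1, snoc3_2,
    relMap_pre, relMap_clone, relMap_le]


end Paper
end

section
/- The existence of an infinite branch is not expressible in weak monadic second-order logic: there is no first-order sentence φ over the weak-MSO companion language of trees (a unary sort predicate, a binary membership relation, a binary order relation, and a unary root predicate) such that for every tree T, the weak-MSO companion of T satisfies φ if and only if there is a strictly increasing function f : ℕ → T. -/
open FirstOrder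

section AuxDev
open FirstOrder List

noncomputable section
namespace PaperAux


/-- Rank values: ordinals below `ω²` (as `ℕ ×ₗ ℕ`) together with a top element. -/
abbrev G : Type := WithTop (ℕ ×ₗ ℕ)

instance : DecidableEq (ℕ ×ₗ ℕ) := inferInstanceAs (DecidableEq (ℕ × ℕ))

def ot (a b : ℕ) : G := ((toLex (a, b) : ℕ ×ₗ ℕ) : G)

lemma ot_lt_ot {a b c d : ℕ} : ot a b < ot c d ↔ a < c ∨ (a = c ∧ b < d) := by
  rw [ot, ot, WithTop.coe_lt_coe, Prod.Lex.lt_iff]; exact Iff.rfl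

lemma ot_le_ot {a b c d : ℕ} : ot a b ≤ ot c d ↔ a < c ∨ (a = c ∧ b ≤ d) := by
  rw [ot, ot, WithTop.coe_le_coe, Prod.Lex.le_iff]; exact Iff.rfl

lemma ot_ne_top (a b : ℕ) : ot a b ≠ ⊤ := WithTop.coe_ne_top

lemma ot_lt_top (a b : ℕ) : ot a b < ⊤ := WithTop.coe_lt_top _

def θ (n : ℕ) : G := ot n 0

lemma θ_lt_θ {n m : ℕ} (h : n < m) : θ n < θ m := ot_lt_ot.2 (Or.inl h)

lemma θ_mono {n m : ℕ} (h : n ≤ m) : θ n ≤ θ m := by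
  rcases h.lt_or_eq with h | h
  · exact (θ_lt_θ h).le
  · rw [h]

lemma θ_le_top (n : ℕ) : θ n ≤ (⊤ : G) := le_top

def simR (n : ℕ) (r s : G) : Prop := r = s ∨ (θ n ≤ r ∧ θ n ≤ s)

lemma simR.symm {n r s} (h : simR n r s) : simR n s r := by
  rcases h with h | h
  · exact Or.inl h.symm
  · exact Or.inr ⟨h.2, h.1⟩

lemma simR_anti {n m r s} (h : simR m r s) (hnm : n ≤ m) : simR n r s := by
  rcases h with h | h
  · exact Or.inl h
  · exact Or.inr ⟨(θ_mono hnm).trans h.1, (θ_mono hnm).trans h.2⟩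

lemma simR_refl (n r) : simR n r r := Or.inl rfl

/-! ### Words -/

abbrev W : Type := List (ℕ × G)

/-- The rank of a word: the rank of its last letter, `⊤` for the empty word. -/
def rkw (w : W) : G := ((w.getLast?).map Prod.snd).getD ⊤

@[simp] lemma rkw_nil : rkw ([] : W) = ⊤ := rfl

@[simp] lemma rkw_concat (w : W) (l : ℕ × G) : rkw (w ++ [l]) = l.2 := by
  simp [rkw, List.getLast?_concat]

/-- Validity of a word: ranks strictly decrease (with children of a `⊤`-ranked letter
unconstrained); if `b = false`, no `⊤` labels at all. -/
def Ok (b : Bool) (w : W) : Prop :=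
  List.IsChain (fun a c => c.2 < a.2 ∨ a.2 = ⊤) w ∧ (b = false → ∀ l ∈ w, l.2 ≠ (⊤ : G))

lemma ok_nil (b : Bool) : Ok b [] := ⟨List.isChain_nil, fun _ _ h => absurd h (List.not_mem_nil)⟩

lemma Ok.prefix {b : Bool} {w u : W} (h : Ok b w) (hu : u <+: w) : Ok b u :=
  ⟨h.1.prefix hu, fun hb l hl => h.2 hb l (hu.subset hl)⟩

lemma rkw_eq_getLast {w : W} (hw : w ≠ []) : rkw w = (w.getLast hw).2 := by
  simp [rkw, List.getLast?_eq_getLast hw]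

lemma ok_concat {b : Bool} {w : W} {l : ℕ × G} :
    Ok b (w ++ [l]) ↔ Ok b w ∧ (l.2 < rkw w ∨ rkw w = ⊤) ∧ (b = false → l.2 ≠ ⊤) := by
  constructor
  · intro h
    have h1 := h.1
    rw [List.isChain_append] at h1
    refine ⟨⟨h1.1, fun hb x hx => h.2 hb x (by simp [hx])⟩, ?_, fun hb => h.2 hb l (by simp)⟩
    rcases eq_or_ne w [] with rfl | hw
    · exact Or.inr rfl
    · have := h1.2.2 (w.getLast hw) (List.getLast?_eq_getLast hw ▸ rfl) l rfl
      rw [rkw_eq_getLast hw]; exact this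
  · rintro ⟨hw, hstep, htop⟩
    constructor
    · rw [List.isChain_append]
      refine ⟨hw.1, List.isChain_singleton _, ?_⟩
      intro x hx y hy
      rcases eq_or_ne w [] with rfl | hw0
      · simp at hx
      · rw [List.getLast?_eq_getLast hw0, Option.mem_some_iff] at hx
        simp only [List.head?_cons, Option.mem_some_iff] at hy
        subst hx; subst hy
        rwa [rkw_eq_getLast hw0] at hstep
    · intro hb x hx
      rcases List.mem_append.1 hx with hx | hx
      · exact hw.2 hb x hx
      · simp at hx; subst hx; exact htop hb

/-- If `w` is a valid nonempty word, its rank "steps down" from the rank of `dropLast w`. -/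
lemma rk_step {b : Bool} {w : W} (h : Ok b w) (hw : w ≠ []) :
    rkw w < rkw w.dropLast ∨ rkw w.dropLast = ⊤ := by
  have hsplit : w.dropLast ++ [w.getLast hw] = w := List.dropLast_append_getLast hw
  have h' : Ok b (w.dropLast ++ [w.getLast hw]) := by rw [hsplit]; exact h
  have := (ok_concat.1 h').2.1
  rw [rkw_eq_getLast hw]; exact this

lemma rkw_ne_top_of_ok_false {w : W} (h : Ok false w) (hw : w ≠ []) : rkw w ≠ ⊤ := by
  rw [rkw_eq_getLast hw]
  exact h.2 rfl _ (List.getLast_mem hw)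


end PaperAux

namespace PaperAux

/-! ### The two trees -/

def Tr (b : Bool) : Type := {w : W // Ok b w}

instance (b : Bool) : PartialOrder (Tr b) where
  le u v := u.1 <+: v.1
  le_refl u := List.prefix_refl _
  le_trans u v w h1 h2 := List.IsPrefix.trans h1 h2
  le_antisymm u v h1 h2 :=
    Subtype.ext (List.IsPrefix.eq_of_length h1
      (Nat.le_antisymm (List.IsPrefix.length_le h1) (List.IsPrefix.length_le h2)))

lemma Tr.le_def {b : Bool} (u v : Tr b) : u ≤ v ↔ u.1 <+: v.1 := Iff.rfl

instance (b : Bool) : OrderBot (Tr b) where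
  bot := ⟨[], ok_nil b⟩
  bot_le u := show ([] : W) <+: u.1 from List.nil_prefix

lemma Tr.bot_def (b : Bool) : (⊥ : Tr b).1 = [] := rfl

lemma Tr.lt_of_length {b : Bool} {u v : Tr b} (h : u ≤ v) (hl : u.1.length < v.1.length) :
    u < v := by
  refine lt_of_le_of_ne h (fun he => ?_)
  subst he; exact lt_irrefl _ hl

lemma Tr.length_lt_of_lt {b : Bool} {u v : Tr b} (h : u < v) : u.1.length < v.1.length := by
  rcases Nat.lt_or_ge u.1.length v.1.length with h' | h'
  · exact h'
  · exact absurd (Subtype.ext (List.IsPrefix.eq_of_length ((Tr.le_def _ _).1 h.le)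
      (Nat.le_antisymm (List.IsPrefix.length_le ((Tr.le_def _ _).1 h.le)) h'))) h.ne

end PaperAux

namespace PaperAux

lemma finite_below {b : Bool} (v : Tr b) : {u : Tr b | u ≤ v}.Finite := by
  classical
  have hsub : {u : Tr b | u ≤ v} ⊆
      (fun k : ℕ => if h : Ok b (v.1.take k) then (⟨v.1.take k, h⟩ : Tr b) else v) ''
        (Set.Iic v.1.length) := by
    intro u hu
    refine ⟨u.1.length, Set.mem_Iic.2 (List.IsPrefix.length_le hu), ?_⟩
    have ht : v.1.take u.1.length = u.1 := (List.prefix_iff_eq_take.1 hu).symm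
    have hok : Ok b (v.1.take u.1.length) := by rw [ht]; exact u.2
    simp only
    refine (dif_pos hok).trans ?_
    exact Subtype.ext ht
  exact ((Set.finite_Iic _).image _).subset hsub

lemma linear_below {b : Bool} (v u w : Tr b) (hu : u ≤ v) (hw : w ≤ v) : u ≤ w ∨ w ≤ u :=
  List.prefix_or_prefix_of_prefix hu hw

lemma branch_true : ∃ f : ℕ → Tr true, StrictMono f := by
  have hok : ∀ n : ℕ, Ok true (List.replicate n ((0 : ℕ), (⊤ : G))) := by
    intro n
    refine ⟨?_, fun h => absurd h (by simp)⟩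
    induction n with
    | zero => exact List.isChain_nil
    | succ m ih =>
      rw [List.replicate_succ]
      rcases m with _ | m
      · simp
      · rw [List.replicate_succ]
        exact List.IsChain.cons_cons (Or.inr rfl) (List.replicate_succ ▸ ih)
  refine ⟨fun n => ⟨List.replicate n ((0 : ℕ), (⊤ : G)), hok n⟩, ?_⟩
  intro n m hnm
  have hle : List.replicate n ((0:ℕ), (⊤:G)) <+: List.replicate m ((0:ℕ), (⊤:G)) := by
    refine ⟨List.replicate (m - n) ((0:ℕ), (⊤:G)), ?_⟩
    rw [← List.replicate_add]
    congr 1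
    omega
  refine Tr.lt_of_length hle ?_
  simpa using hnm

lemma branch_false : ¬ ∃ f : ℕ → Tr false, StrictMono f := by
  rintro ⟨f, hf⟩
  have hlen : ∀ n : ℕ, n ≤ (f n).1.length := by
    intro n
    induction n with
    | zero => exact Nat.zero_le _
    | succ m ih =>
      have := Tr.length_lt_of_lt (hf (by omega : m < m + 1))
      omega
  have hpref : ∀ {n m : ℕ}, n ≤ m → (f n).1 <+: (f m).1 := by
    intro n m h
    exact (Tr.le_def _ _).1 (hf.monotone h)
  -- the label sequence
  have hget : ∀ (k m : ℕ) (h : k < m), k < (f m).1.length := fun k m h => lt_of_lt_of_le h (hlen m)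
  set d : ℕ → G := fun k => ((f (k + 1)).1.getD k ((0 : ℕ), (⊤ : G))).2 with hd
  have hdm : ∀ (k m : ℕ), k < m → d k = ((f m).1.getD k ((0:ℕ), (⊤:G))).2 := by
    intro k m hk
    obtain ⟨t, ht⟩ := hpref (Nat.succ_le_of_lt hk)
    rw [hd]
    simp only
    rw [← ht, List.getD_append _ _ _ _ (hget k (k+1) (Nat.lt_succ_self k))]
  have hdesc : ∀ k : ℕ, d (k + 1) < d k := by
    intro k
    have h1 : d k = ((f (k+2)).1.getD k ((0:ℕ),(⊤:G))).2 := hdm k (k+2) (by omega)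
    have h2 : d (k+1) = ((f (k+2)).1.getD (k+1) ((0:ℕ),(⊤:G))).2 := hdm (k+1) (k+2) (by omega)
    have hc := (f (k+2)).2.1
    rw [List.isChain_iff_getElem] at hc
    have hk2 : k + 1 < (f (k+2)).1.length := hget (k+1) (k+2) (by omega)
    have := hc k (by omega)
    have hne : ((f (k+2)).1.get ⟨k, by omega⟩).2 ≠ ⊤ :=
      (f (k+2)).2.2 rfl _ (List.get_mem _ _)
    rcases this with h | h
    · rw [h1, h2]
      rw [List.getD_eq_getElem _ _ (hget (k+1) (k+2) (by omega)),
        List.getD_eq_getElem _ _ (hget k (k+2) (by omega))]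
      simpa [List.get_eq_getElem] using h
    · exact absurd h hne
  -- well-foundedness of G
  have hwf : WellFounded ((· < ·) : G → G → Prop) := wellFounded_lt
  obtain ⟨x, ⟨k, rfl⟩, hmin⟩ := hwf.has_min (Set.range d) ⟨d 0, 0, rfl⟩
  exact hmin (d (k+1)) ⟨k+1, rfl⟩ (hdesc k)

end PaperAux

namespace PaperAux

/-! ### Partial isomorphisms between the two trees -/

structure PIso (b₁ b₂ : Bool) (n : ℕ) (F : Finset (W × W)) : Prop where
  root_mem : ((([] : W), ([] : W))) ∈ F
  ok1 : ∀ p ∈ F, Ok b₁ p.1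
  ok2 : ∀ p ∈ F, Ok b₂ p.2
  len : ∀ p ∈ F, p.1.length = p.2.length
  par : ∀ p ∈ F, p.1 ≠ [] → (p.1.dropLast, p.2.dropLast) ∈ F
  inj1 : ∀ p ∈ F, ∀ q ∈ F, p.1 = q.1 → p = q
  inj2 : ∀ p ∈ F, ∀ q ∈ F, p.2 = q.2 → p = q
  rsim : ∀ p ∈ F, simR n (rkw p.1) (rkw p.2)

variable {b₁ b₂ : Bool} {n : ℕ} {F : Finset (W × W)}

lemma PIso.nil_iff (h : PIso b₁ b₂ n F) {p : W × W} (hp : p ∈ F) : p.1 = [] ↔ p.2 = [] := by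
  constructor <;> intro he
  · have := h.len p hp
    rw [he] at this
    exact List.length_eq_zero_iff.1 this.symm
  · have := h.len p hp
    rw [he] at this
    exact List.length_eq_zero_iff.1 this

lemma PIso.mono1 (h : PIso b₁ b₂ n F) :
    ∀ (m : ℕ), ∀ p ∈ F, ∀ q ∈ F, q.1.length ≤ m → p.1 <+: q.1 → p.2 <+: q.2 := by
  intro m
  induction m with
  | zero =>
    intro p hp q hq hlen hpre
    have hq0 : q.1 = [] := List.length_eq_zero_iff.1 (Nat.le_zero.1 hlen)
    have hp0 : p.1 = [] := List.prefix_nil.1 (hq0 ▸ hpre)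
    have := h.inj1 p hp q hq (hp0.trans hq0.symm)
    rw [this]
  | succ m ih =>
    intro p hp q hq hlen hpre
    rcases eq_or_ne p.1 q.1 with he | hne
    · rw [h.inj1 p hp q hq he]
    · have hlt : p.1.length < q.1.length :=
        lt_of_le_of_ne (List.IsPrefix.length_le hpre)
          (fun hl => hne (List.IsPrefix.eq_of_length hpre hl))
      have hq0 : q.1 ≠ [] := by
        intro h0; rw [h0] at hlt; simp at hlt
      have hqd := h.par q hq hq0
      have hpre' : p.1 <+: q.1.dropLast := by
        rw [List.prefix_iff_eq_take.1 hpre, List.dropLast_eq_take]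
        exact List.take_prefix_take_left (by omega)
      have h2 : p.2 <+: q.2.dropLast :=
        ih p hp (q.1.dropLast, q.2.dropLast) hqd (by simp [List.length_dropLast]; omega) hpre'
      exact h2.trans (List.dropLast_prefix _)

def swapF (F : Finset (W × W)) : Finset (W × W) := F.image Prod.swap

lemma mem_swapF {p : W × W} : p ∈ swapF F ↔ (p.2, p.1) ∈ F := by
  classical
  simp only [swapF, Finset.mem_image, Prod.swap]
  constructor
  · rintro ⟨q, hq, rfl⟩
    exact hq
  · intro hp
    exact ⟨(p.2, p.1), hp, rfl⟩

lemma PIso.swap (h : PIso b₁ b₂ n F) : PIso b₂ b₁ n (swapF F) where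
  root_mem := mem_swapF.2 h.root_mem
  ok1 p hp := h.ok2 _ (mem_swapF.1 hp)
  ok2 p hp := h.ok1 _ (mem_swapF.1 hp)
  len p hp := (h.len _ (mem_swapF.1 hp)).symm
  par p hp hne := by
    refine mem_swapF.2 ?_
    have hmem := mem_swapF.1 hp
    have hne2 : p.2 ≠ [] := by
      intro h0
      exact hne ((h.nil_iff hmem).1 h0)
    exact h.par _ hmem hne2
  inj1 p hp q hq he := by
    have := h.inj2 _ (mem_swapF.1 hp) _ (mem_swapF.1 hq) he
    have h1 : p.2 = q.2 := congrArg Prod.fst this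
    exact Prod.ext he h1
  inj2 p hp q hq he := by
    have := h.inj1 _ (mem_swapF.1 hp) _ (mem_swapF.1 hq) he
    have h1 : p.1 = q.1 := congrArg Prod.snd this
    exact Prod.ext h1 he
  rsim p hp := (h.rsim _ (mem_swapF.1 hp)).symm

lemma PIso.prefix_iff (h : PIso b₁ b₂ n F) {p q : W × W} (hp : p ∈ F) (hq : q ∈ F) :
    p.1 <+: q.1 ↔ p.2 <+: q.2 := by
  constructor
  · exact h.mono1 q.1.length p hp q hq le_rfl
  · intro h2
    exact h.swap.mono1 q.2.length (p.2, p.1) (mem_swapF.2 (by simpa using hp))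
      (q.2, q.1) (mem_swapF.2 (by simpa using hq)) le_rfl h2

lemma PIso.eq_iff (h : PIso b₁ b₂ n F) {p q : W × W} (hp : p ∈ F) (hq : q ∈ F) :
    p.1 = q.1 ↔ p.2 = q.2 := by
  constructor
  · intro he; exact congrArg Prod.snd (h.inj1 p hp q hq he)
  · intro he; exact congrArg Prod.fst (h.inj2 p hp q hq he)

lemma piso_init (b₁ b₂ : Bool) (n : ℕ) : PIso b₁ b₂ n {(([] : W), ([] : W))} where
  root_mem := Finset.mem_singleton_self _
  ok1 p hp := by rw [Finset.mem_singleton] at hp; subst hp; exact ok_nil _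
  ok2 p hp := by rw [Finset.mem_singleton] at hp; subst hp; exact ok_nil _
  len p hp := by rw [Finset.mem_singleton] at hp; subst hp; rfl
  par p hp hne := by rw [Finset.mem_singleton] at hp; subst hp; simp at hne
  inj1 p hp q hq _ := by
    rw [Finset.mem_singleton] at hp hq; rw [hp, hq]
  inj2 p hp q hq _ := by
    rw [Finset.mem_singleton] at hp hq; rw [hp, hq]
  rsim p hp := by rw [Finset.mem_singleton] at hp; subst hp; exact simR_refl _ _

end PaperAux

namespace PaperAux
open scoped Classical
section Extend

variable {b₁ b₂ : Bool} {n : ℕ}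

/-- The domain of the partial isomorphism. -/
def P1 (F : Finset (W × W)) : Set W := {x | ∃ y, (x, y) ∈ F}

noncomputable def gmap (F : Finset (W × W)) (x : W) : W :=
  if h : ∃ y, (x, y) ∈ F then h.choose else []

lemma gmap_mem {F : Finset (W × W)} {x : W} (hx : x ∈ P1 F) : (x, gmap F x) ∈ F := by
  have hx' : ∃ y, (x, y) ∈ F := hx
  rw [gmap, dif_pos hx']
  exact hx'.choose_spec

lemma mem_P1_of_mem {F : Finset (W × W)} {p : W × W} (hp : p ∈ F) : p.1 ∈ P1 F := ⟨p.2, hp⟩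

noncomputable def anchor (F : Finset (W × W)) (x : W) : W :=
  if x = [] ∨ x ∈ P1 F then x else anchor F x.dropLast
termination_by x.length
decreasing_by
  simp only [List.length_dropLast]
  rename_i hx
  push_neg at hx
  have := List.length_pos_iff.2 hx.1
  omega

lemma anchor_of_mem {F : Finset (W × W)} {x : W} (hx : x ∈ P1 F) : anchor F x = x := by
  rw [anchor, if_pos (Or.inr hx)]

lemma anchor_of_not_mem {F : Finset (W × W)} {x : W} (hroot : ([] : W) ∈ P1 F) (hx : x ∉ P1 F) :
    anchor F x = anchor F x.dropLast := by
  have hne : x ≠ [] := fun h0 => hx (h0 ▸ hroot)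
  rw [anchor, if_neg (by push_neg; exact ⟨hne, hx⟩)]

lemma anchor_mem_aux {F : Finset (W × W)} (hroot : ([] : W) ∈ P1 F) :
    ∀ (m : ℕ) (x : W), x.length ≤ m → anchor F x ∈ P1 F := by
  intro m
  induction m with
  | zero =>
    intro x hx
    have : x = [] := List.length_eq_zero_iff.1 (Nat.le_zero.1 hx)
    subst this
    rw [anchor_of_mem hroot]
    exact hroot
  | succ m ih =>
    intro x hx
    by_cases hm : x ∈ P1 F
    · rw [anchor_of_mem hm]; exact hm
    · have hne : x ≠ [] := fun h0 => hm (h0 ▸ hroot)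
      rw [anchor_of_not_mem hroot hm]
      exact ih x.dropLast (by have := List.length_pos_iff.2 hne; simp [List.length_dropLast]; omega)

lemma anchor_mem {F : Finset (W × W)} (hroot : ([] : W) ∈ P1 F) (x : W) :
    anchor F x ∈ P1 F := anchor_mem_aux hroot x.length x le_rfl

/-- Copy-anchor condition: the ranks at the anchor agree (and are not `⊤`). -/
def copyC (F : Finset (W × W)) (x : W) : Prop :=
  rkw (gmap F (anchor F x)) = rkw (anchor F x) ∧ rkw (anchor F x) ≠ ⊤

/-- The rank assigned to the mirror image of a new node. -/
noncomputable def psiR (F : Finset (W × W)) (n K : ℕ) (x : W) : G :=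
  if copyC F x then rkw x else if rkw x < θ n then rkw x else ot n (K - x.length)

noncomputable def Jlet (l : ℕ × G) : ℕ :=
  Nat.pair l.1 (WithTop.recTopCoe 0 (fun γ => Nat.pair (ofLex γ).1 (ofLex γ).2 + 1) l.2)

lemma Jlet_inj : Function.Injective Jlet := by
  rintro ⟨a1, γ⟩ ⟨b1, δ⟩ h
  unfold Jlet at h
  simp only at h
  obtain ⟨h1, h2⟩ := Nat.pair_eq_pair.1 h
  subst h1
  induction γ using WithTop.recTopCoe <;> induction δ using WithTop.recTopCoe <;>
    simp only [WithTop.recTopCoe_top, WithTop.recTopCoe_coe] at h2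
  · rfl
  · exact absurd h2.symm (Nat.succ_ne_zero _)
  · exact absurd h2 (Nat.succ_ne_zero _)
  · rename_i γ δ
    obtain ⟨h3, h4⟩ := Nat.pair_eq_pair.1 (Nat.succ_injective h2)
    have hγδ : γ = δ := by
      have h5 : ofLex γ = ofLex δ := Prod.ext h3 h4
      exact h5
    rw [hγδ]

def maxW (w : W) : ℕ := (w.map Prod.fst).foldr max 0

lemma le_maxW {w : W} {l : ℕ × G} (hl : l ∈ w) : l.1 ≤ maxW w := by
  induction w with
  | nil => exact absurd hl (List.not_mem_nil)
  | cons a t ih =>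
    rcases List.mem_cons.1 hl with rfl | hl
    · exact le_max_left _ _
    · exact (ih hl).trans (le_max_right _ _)

noncomputable def maxTag (F : Finset (W × W)) : ℕ := F.sup (fun p => maxW p.2)

lemma old_letter_le {F : Finset (W × W)} {p : W × W} (hp : p ∈ F) {l : ℕ × G} (hl : l ∈ p.2) :
    l.1 ≤ maxTag F :=
  (le_maxW hl).trans (Finset.le_sup (f := fun p => maxW p.2) hp)

noncomputable def tagf (F : Finset (W × W)) (x : W) : ℕ :=
  maxTag F + 1 + Jlet (x.getLast?.getD ((0 : ℕ), (⊤ : G)))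

lemma tagf_eq_getLast {F : Finset (W × W)} {x : W} (hx : x ≠ []) :
    tagf F x = maxTag F + 1 + Jlet (x.getLast hx) := by
  rw [tagf, List.getLast?_eq_getLast hx]
  rfl

noncomputable def Psi (F : Finset (W × W)) (n K : ℕ) (x : W) : W :=
  if x = [] ∨ x ∈ P1 F then gmap F x
  else Psi F n K x.dropLast ++ [(tagf F x, psiR F n K x)]
termination_by x.length
decreasing_by
  simp only [List.length_dropLast]
  rename_i hx
  push_neg at hx
  have := List.length_pos_iff.2 hx.1
  omega

lemma Psi_of_mem {F : Finset (W × W)} {x : W} (hx : x ∈ P1 F) {K : ℕ} :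
    Psi F n K x = gmap F x := by
  rw [Psi, if_pos (Or.inr hx)]

lemma Psi_of_not_mem {F : Finset (W × W)} {x : W} (hroot : ([] : W) ∈ P1 F) (hx : x ∉ P1 F)
    {K : ℕ} : Psi F n K x = Psi F n K x.dropLast ++ [(tagf F x, psiR F n K x)] := by
  have hne : x ≠ [] := fun h0 => hx (h0 ▸ hroot)
  rw [Psi, if_neg (by push_neg; exact ⟨hne, hx⟩)]

end Extend
end PaperAux

namespace PaperAux
open scoped Classical
section Master

variable {b₁ b₂ : Bool} {n : ℕ}

lemma θ_le_ot (n j : ℕ) : θ n ≤ ot n j := ot_le_ot.2 (Or.inr ⟨rfl, Nat.zero_le _⟩)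

lemma master {F : Finset (W × W)} (hF : PIso b₁ b₂ (n+1) F) (K : ℕ) :
    ∀ (m : ℕ) (x : W), Ok b₁ x → x.length ≤ K → x.length ≤ m →
      ((x ∉ P1 F → copyC F x → rkw x < rkw (anchor F x))
        ∧ (Psi F n K x).length = x.length
        ∧ Ok b₂ (Psi F n K x)
        ∧ simR n (rkw x) (rkw (Psi F n K x))
        ∧ rkw (Psi F n K x) = (if x ∈ P1 F then rkw (gmap F x) else psiR F n K x)) := by
  have hroot : ([] : W) ∈ P1 F := ⟨[], hF.root_mem⟩
  have base : ∀ x ∈ P1 F,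
      ((x ∉ P1 F → copyC F x → rkw x < rkw (anchor F x))
        ∧ ∀ K : ℕ, (Psi F n K x).length = x.length
        ∧ Ok b₂ (Psi F n K x)
        ∧ simR n (rkw x) (rkw (Psi F n K x))
        ∧ rkw (Psi F n K x) = (if x ∈ P1 F then rkw (gmap F x) else psiR F n K x)) := by
    intro x hx
    have hpair := gmap_mem hx
    refine ⟨fun hn => absurd hx hn, fun K => ?_⟩
    have hPsi : Psi F n K x = gmap F x := Psi_of_mem hx
    refine ⟨?_, ?_, ?_, ?_⟩
    · rw [hPsi]; exact (hF.len _ hpair).symm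
    · rw [hPsi]; exact hF.ok2 _ hpair
    · rw [hPsi]; exact simR_anti (hF.rsim _ hpair) (Nat.le_succ n)
    · rw [hPsi, if_pos hx]
  intro m
  induction m with
  | zero =>
    intro x hOk hK hm
    have hx0 : x = [] := List.length_eq_zero_iff.1 (Nat.le_zero.1 hm)
    subst hx0
    exact ⟨(base [] hroot).1, (base [] hroot).2 K⟩
  | succ m ih =>
    intro x hOk hK hm
    by_cases hmem : x ∈ P1 F
    · exact ⟨(base x hmem).1, (base x hmem).2 K⟩
    · have hxne : x ≠ [] := fun h0 => hmem (h0 ▸ hroot)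
      have hxlen : 0 < x.length := List.length_pos_iff.2 hxne
      have hx'pre : x.dropLast <+: x := List.dropLast_prefix x
      have hx'ok : Ok b₁ x.dropLast := hOk.prefix hx'pre
      have hx'len : x.dropLast.length = x.length - 1 := List.length_dropLast
      obtain ⟨ihaux, ihlen, ihok, ihsim, ihrk⟩ := ih x.dropLast hx'ok (by omega) (by omega)
      have hPsi : Psi F n K x = Psi F n K x.dropLast ++ [(tagf F x, psiR F n K x)] :=
        Psi_of_not_mem hroot hmem
      have hanch : anchor F x = anchor F x.dropLast := anchor_of_not_mem hroot hmem
      have hcopyiff : copyC F x ↔ copyC F x.dropLast := by unfold copyC; rw [hanch]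
      have hstep := rk_step hOk hxne
      have hanchpair : (anchor F x, gmap F (anchor F x)) ∈ F := gmap_mem (anchor_mem hroot x)
      have hsimRS : simR (n+1) (rkw (anchor F x)) (rkw (gmap F (anchor F x))) :=
        hF.rsim _ hanchpair
      have key : (copyC F x → rkw x < rkw (anchor F x))
          ∧ (psiR F n K x < rkw (Psi F n K x.dropLast) ∨ rkw (Psi F n K x.dropLast) = ⊤)
          ∧ psiR F n K x ≠ ⊤ := by
        by_cases hcopy : copyC F x
        · have hpsix : psiR F n K x = rkw x := by rw [psiR, if_pos hcopy]
          obtain ⟨hcs, hct⟩ := hcopy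
          by_cases hmem' : x.dropLast ∈ P1 F
          · have hax : anchor F x = x.dropLast := by rw [hanch, anchor_of_mem hmem']
            have hrx : rkw x < rkw (anchor F x) := by
              rcases hstep with h | h
              · rw [hax]; exact h
              · exact absurd (by rw [hax]; exact h) hct
            refine ⟨fun _ => hrx, ?_, by rw [hpsix]; exact ne_top_of_lt hrx⟩
            left
            rw [ihrk, if_pos hmem', hpsix]
            have h2 : rkw (gmap F x.dropLast) = rkw x.dropLast := by rw [← hax]; exact hcs
            rw [h2, ← hax]
            exact hrx
          · have hcopy' : copyC F x.dropLast := hcopyiff.1 ⟨hcs, hct⟩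
            have haux' : rkw x.dropLast < rkw (anchor F x.dropLast) := ihaux hmem' hcopy'
            have hx'top : rkw x.dropLast ≠ ⊤ := ne_top_of_lt haux'
            have hxx' : rkw x < rkw x.dropLast := hstep.resolve_right hx'top
            have hrx : rkw x < rkw (anchor F x) := by
              rw [hanch]; exact lt_trans hxx' haux'
            refine ⟨fun _ => hrx, ?_, by rw [hpsix]; exact ne_top_of_lt hrx⟩
            left
            rw [ihrk, if_neg hmem']
            have hpsix' : psiR F n K x.dropLast = rkw x.dropLast := by
              rw [psiR, if_pos hcopy']
            rw [hpsix', hpsix]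
            exact hxx'
        · have hcopy0 : ¬(rkw (gmap F (anchor F x)) = rkw (anchor F x)
              ∧ rkw (anchor F x) ≠ ⊤) := hcopy
          have hpsix : psiR F n K x = if rkw x < θ n then rkw x else ot n (K - x.length) := by
            rw [psiR, if_neg hcopy]
          have hnotop : psiR F n K x ≠ ⊤ := by
            rw [hpsix]; split_ifs with h
            · exact ne_top_of_lt h
            · exact ot_ne_top _ _
          have hsmall : psiR F n K x < θ (n+1) := by
            rw [hpsix]; split_ifs with h
            · exact lt_trans h (θ_lt_θ (Nat.lt_succ_self n))
            · exact ot_lt_ot.2 (Or.inl (Nat.lt_succ_self n))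
          refine ⟨fun hc => absurd hc hcopy, ?_, hnotop⟩
          by_cases hmem' : x.dropLast ∈ P1 F
          · have hax : anchor F x = x.dropLast := by rw [hanch, anchor_of_mem hmem']
            have hsBig : θ (n+1) ≤ rkw (gmap F x.dropLast) := by
              have hs' : simR (n+1) (rkw x.dropLast) (rkw (gmap F x.dropLast)) := by
                rw [← hax]; exact hsimRS
              have hax' : ¬(rkw (gmap F x.dropLast) = rkw x.dropLast
                  ∧ rkw x.dropLast ≠ ⊤) := by rw [← hax]; exact hcopy0
              rcases hs' with he | ⟨_, h2⟩
              · rcases not_and_or.1 hax' with h | h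
                · exact absurd he.symm h
                · rw [← he, not_not.1 h]; exact le_top
              · exact h2
            left
            rw [ihrk, if_pos hmem']
            exact lt_of_lt_of_le hsmall hsBig
          · have hcopy' : ¬ copyC F x.dropLast := fun hc => hcopy (hcopyiff.2 hc)
            have hpsix' : psiR F n K x.dropLast =
                if rkw x.dropLast < θ n then rkw x.dropLast else ot n (K - x.dropLast.length) := by
              rw [psiR, if_neg hcopy']
            left
            rw [ihrk, if_neg hmem', hpsix']
            split_ifs with h'
            · have hx'top : rkw x.dropLast ≠ ⊤ := ne_top_of_lt h'
              have hxx' : rkw x < rkw x.dropLast := hstep.resolve_right hx'top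
              rw [hpsix, if_pos (lt_trans hxx' h')]
              exact hxx'
            · rw [hpsix]
              split_ifs with h2
              · exact lt_of_lt_of_le h2 (θ_le_ot _ _)
              · refine ot_lt_ot.2 (Or.inr ⟨rfl, ?_⟩)
                omega
      obtain ⟨haux, htstep, hnotop⟩ := key
      refine ⟨fun _ => haux, ?_, ?_, ?_, ?_⟩
      · rw [hPsi, List.length_append, ihlen, List.length_singleton]
        omega
      · rw [hPsi]
        exact ok_concat.2 ⟨ihok, htstep, fun _ => hnotop⟩
      · have hrkP : rkw (Psi F n K x) = psiR F n K x := by rw [hPsi, rkw_concat]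
        rw [hrkP, psiR]
        split_ifs with h1 h2
        · exact simR_refl _ _
        · exact simR_refl _ _
        · exact Or.inr ⟨not_lt.1 h2, θ_le_ot _ _⟩
      · rw [hPsi, rkw_concat, if_neg hmem]

end Master
end PaperAux

namespace PaperAux
open scoped Classical
section ExtendCore

variable {b₁ b₂ : Bool} {n : ℕ}

lemma psi_ne_old {F : Finset (W × W)} (hroot : ([] : W) ∈ P1 F) {x : W} (hx : x ∉ P1 F)
    {K : ℕ} {p : W × W} (hp : p ∈ F) : Psi F n K x ≠ p.2 := by
  intro he
  have hPsi := Psi_of_not_mem (n := n) (K := K) hroot hx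
  have hmem : (tagf F x, psiR F n K x) ∈ p.2 := by
    rw [← he, hPsi]
    simp
  have h1 := old_letter_le hp hmem
  simp only [tagf] at h1
  omega

lemma psi_inj {F : Finset (W × W)} (hroot : ([] : W) ∈ P1 F) {K : ℕ} :
    ∀ (m : ℕ) (x y : W), x.length ≤ m →
      (∀ q ∈ F, ∀ r ∈ F, q.2 = r.2 → q = r) →
      Psi F n K x = Psi F n K y → x = y := by
  intro m
  induction m with
  | zero =>
    intro x y hm hinj2 he
    have hx0 : x = [] := List.length_eq_zero_iff.1 (Nat.le_zero.1 hm)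
    subst hx0
    by_cases hy : y ∈ P1 F
    · -- Psi [] = gmap [], Psi y = gmap y, both old: inj2
      rw [Psi_of_mem hroot, Psi_of_mem hy] at he
      have := hinj2 ([], gmap F []) (gmap_mem hroot) (y, gmap F y) (gmap_mem hy) he
      exact (congrArg Prod.fst this)
    · rw [Psi_of_mem hroot] at he
      exact absurd he.symm (psi_ne_old hroot hy (gmap_mem hroot))
  | succ m ih =>
    intro x y hm hinj2 he
    by_cases hx : x ∈ P1 F <;> by_cases hy : y ∈ P1 F
    · rw [Psi_of_mem hx, Psi_of_mem hy] at he
      have := hinj2 (x, gmap F x) (gmap_mem hx) (y, gmap F y) (gmap_mem hy) he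
      exact (congrArg Prod.fst this)
    · rw [Psi_of_mem hx] at he
      exact absurd he.symm (psi_ne_old hroot hy (gmap_mem hx))
    · rw [Psi_of_mem hy] at he
      exact absurd he (psi_ne_old hroot hx (gmap_mem hy))
    · have hxne : x ≠ [] := fun h0 => hx (h0 ▸ hroot)
      have hyne : y ≠ [] := fun h0 => hy (h0 ▸ hroot)
      rw [Psi_of_not_mem hroot hx, Psi_of_not_mem hroot hy] at he
      have hdrop : Psi F n K x.dropLast = Psi F n K y.dropLast :=
        (List.append_inj_left' he (by simp))
      have hlet : (tagf F x, psiR F n K x) = (tagf F y, psiR F n K y) := by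
        have := List.append_inj_right' he (by simp)
        simpa using this
      have htag : tagf F x = tagf F y := congrArg Prod.fst hlet
      rw [tagf_eq_getLast hxne, tagf_eq_getLast hyne] at htag
      have hlast : x.getLast hxne = y.getLast hyne := Jlet_inj (by omega)
      have hxd : x.dropLast = y.dropLast := by
        refine ih x.dropLast y.dropLast ?_ hinj2 hdrop
        have := List.length_pos_iff.2 hxne
        simp only [List.length_dropLast]
        omega
      calc x = x.dropLast ++ [x.getLast hxne] := (List.dropLast_append_getLast hxne).symm
        _ = y.dropLast ++ [y.getLast hyne] := by rw [hxd, hlast]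
        _ = y := List.dropLast_append_getLast hyne

lemma extend_core {F : Finset (W × W)} (hF : PIso b₁ b₂ (n+1) F) (E : Finset W)
    (hE : ∀ w ∈ E, Ok b₁ w) :
    ∃ F' : Finset (W × W), F ⊆ F' ∧ PIso b₁ b₂ n F' ∧ ∀ w ∈ E, ∃ y, (w, y) ∈ F' := by
  classical
  have hroot : ([] : W) ∈ P1 F := ⟨[], hF.root_mem⟩
  set K := E.sup List.length with hKdef
  set D : Finset W := (E.biUnion fun e => e.inits.toFinset).filter (fun x => ¬ x ∈ P1 F)
    with hDdef
  have hD : ∀ x : W, x ∈ D ↔ (x ∉ P1 F ∧ ∃ e ∈ E, x <+: e) := by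
    intro x
    simp only [hDdef, Finset.mem_filter, Finset.mem_biUnion, List.mem_toFinset, List.mem_inits]
    tauto
  have hDok : ∀ x ∈ D, Ok b₁ x := by
    intro x hx
    obtain ⟨-, e, he, hpre⟩ := (hD x).1 hx
    exact (hE e he).prefix hpre
  have hDK : ∀ x ∈ D, x.length ≤ K := by
    intro x hx
    obtain ⟨-, e, he, hpre⟩ := (hD x).1 hx
    exact (List.IsPrefix.length_le hpre).trans (Finset.le_sup (f := List.length) he)
  have hM : ∀ x ∈ D,
      ((x ∉ P1 F → copyC F x → rkw x < rkw (anchor F x))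
        ∧ (Psi F n K x).length = x.length
        ∧ Ok b₂ (Psi F n K x)
        ∧ simR n (rkw x) (rkw (Psi F n K x))
        ∧ rkw (Psi F n K x) = (if x ∈ P1 F then rkw (gmap F x) else psiR F n K x)) :=
    fun x hx => master hF K x.length x (hDok x hx) (hDK x hx) le_rfl
  set F' : Finset (W × W) := F ∪ D.image (fun x => (x, Psi F n K x)) with hF'def
  have hmemF' : ∀ p : W × W, p ∈ F' ↔ p ∈ F ∨ ∃ x ∈ D, p = (x, Psi F n K x) := by
    intro p
    simp only [hF'def, Finset.mem_union, Finset.mem_image]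
    constructor
    · rintro (h | ⟨x, hx, rfl⟩)
      · exact Or.inl h
      · exact Or.inr ⟨x, hx, rfl⟩
    · rintro (h | ⟨x, hx, rfl⟩)
      · exact Or.inl h
      · exact Or.inr ⟨x, hx, rfl⟩
  refine ⟨F', Finset.subset_union_left, ?_, ?_⟩
  · constructor
    -- root_mem
    · exact (hmemF' _).2 (Or.inl hF.root_mem)
    -- ok1
    · intro p hp
      rcases (hmemF' p).1 hp with h | ⟨x, hx, rfl⟩
      · exact hF.ok1 p h
      · exact hDok x hx
    -- ok2
    · intro p hp
      rcases (hmemF' p).1 hp with h | ⟨x, hx, rfl⟩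
      · exact hF.ok2 p h
      · exact (hM x hx).2.2.1
    -- len
    · intro p hp
      rcases (hmemF' p).1 hp with h | ⟨x, hx, rfl⟩
      · exact hF.len p h
      · exact ((hM x hx).2.1).symm
    -- par
    · intro p hp hne
      rcases (hmemF' p).1 hp with h | ⟨x, hx, rfl⟩
      · exact (hmemF' _).2 (Or.inl (hF.par p h hne))
      · obtain ⟨hxP, e, he, hpre⟩ := (hD x).1 hx
        have hPsix := Psi_of_not_mem (n := n) (K := K) hroot hxP
        have hdl : (Psi F n K x).dropLast = Psi F n K x.dropLast := by
          rw [hPsix, List.dropLast_concat]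
        simp only [hdl]
        by_cases hx' : x.dropLast ∈ P1 F
        · rw [Psi_of_mem hx']
          exact (hmemF' _).2 (Or.inl (gmap_mem hx'))
        · refine (hmemF' _).2 (Or.inr ⟨x.dropLast, ?_, rfl⟩)
          exact (hD _).2 ⟨hx', e, he, (List.dropLast_prefix x).trans hpre⟩
    -- inj1
    · intro p hp q hq he
      rcases (hmemF' p).1 hp with h1 | ⟨x, hx, rfl⟩ <;> rcases (hmemF' q).1 hq with h2 | ⟨y, hy, rfl⟩
      · exact hF.inj1 p h1 q h2 he
      · exact absurd (mem_P1_of_mem h1) (by rw [he]; exact ((hD y).1 hy).1)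
      · exact absurd (mem_P1_of_mem h2) (by rw [← he]; exact ((hD x).1 hx).1)
      · simp only at he
        rw [he]
    -- inj2
    · intro p hp q hq he
      rcases (hmemF' p).1 hp with h1 | ⟨x, hx, rfl⟩ <;> rcases (hmemF' q).1 hq with h2 | ⟨y, hy, rfl⟩
      · exact hF.inj2 p h1 q h2 he
      · exact absurd he.symm (psi_ne_old hroot ((hD y).1 hy).1 h1)
      · exact absurd he (psi_ne_old hroot ((hD x).1 hx).1 h2)
      · simp only at he
        have := psi_inj (n := n) hroot x.length x y le_rfl hF.inj2 he
        rw [this]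
    -- rsim
    · intro p hp
      rcases (hmemF' p).1 hp with h | ⟨x, hx, rfl⟩
      · exact simR_anti (hF.rsim p h) (Nat.le_succ n)
      · exact (hM x hx).2.2.2.1
  · intro w hw
    by_cases hwP : w ∈ P1 F
    · exact ⟨gmap F w, (hmemF' _).2 (Or.inl (gmap_mem hwP))⟩
    · refine ⟨Psi F n K w, (hmemF' _).2 (Or.inr ⟨w, ?_, rfl⟩)⟩
      exact (hD w).2 ⟨hwP, w, hw, List.prefix_refl w⟩

end ExtendCore
end PaperAux

namespace PaperAux
open Paper
open FirstOrder
open scoped Classical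

section Companion

abbrev Mb (b : Bool) : Type := Tr b ⊕ Finset (Tr b)

variable {b₁ b₂ : Bool} {n : ℕ} {F : Finset (W × W)}

def RelF (F : Finset (W × W)) : Mb b₁ → Mb b₂ → Prop
  | Sum.inl a, Sum.inl c => (a.1, c.1) ∈ F
  | Sum.inr S, Sum.inr T =>
      (∀ a ∈ S, ∃ c ∈ T, (a.1, c.1) ∈ F) ∧ (∀ c ∈ T, ∃ a ∈ S, (a.1, c.1) ∈ F)
  | Sum.inl _, Sum.inr _ => False
  | Sum.inr _, Sum.inl _ => False

lemma RelF.inl_dest {a : Tr b₁} {y : Mb b₂} (h : RelF F (Sum.inl a) y) :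
    ∃ c : Tr b₂, y = Sum.inl c ∧ (a.1, c.1) ∈ F := by
  cases y with
  | inl c => exact ⟨c, rfl, h⟩
  | inr T => exact h.elim

lemma RelF.inr_dest {S : Finset (Tr b₁)} {y : Mb b₂} (h : RelF F (Sum.inr S) y) :
    ∃ T : Finset (Tr b₂), y = Sum.inr T ∧
      (∀ a ∈ S, ∃ c ∈ T, (a.1, c.1) ∈ F) ∧ (∀ c ∈ T, ∃ a ∈ S, (a.1, c.1) ∈ F) := by
  cases y with
  | inl c => exact h.elim
  | inr T => exact ⟨T, rfl, h⟩

lemma RelF.inl_dest' {c : Tr b₂} {x : Mb b₁} (h : RelF F x (Sum.inl c)) :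
    ∃ a : Tr b₁, x = Sum.inl a ∧ (a.1, c.1) ∈ F := by
  cases x with
  | inl a => exact ⟨a, rfl, h⟩
  | inr S => exact h.elim

lemma RelF.inr_dest' {T : Finset (Tr b₂)} {x : Mb b₁} (h : RelF F x (Sum.inr T)) :
    ∃ S : Finset (Tr b₁), x = Sum.inr S ∧
      (∀ a ∈ S, ∃ c ∈ T, (a.1, c.1) ∈ F) ∧ (∀ c ∈ T, ∃ a ∈ S, (a.1, c.1) ∈ F) := by
  cases x with
  | inl a => exact h.elim
  | inr S => exact ⟨S, rfl, h⟩

lemma RelF_mono {F F' : Finset (W × W)} (hsub : F ⊆ F') {x : Mb b₁} {y : Mb b₂}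
    (h : RelF F x y) : RelF F' x y := by
  cases x <;> cases y
  · exact hsub h
  · exact h.elim
  · exact h.elim
  · exact ⟨fun a ha => (h.1 a ha).imp (fun c hc => ⟨hc.1, hsub hc.2⟩),
      fun c hc => (h.2 c hc).imp (fun a ha => ⟨ha.1, hsub ha.2⟩)⟩

lemma RelF_swap {F : Finset (W × W)} {x : Mb b₁} {y : Mb b₂} :
    RelF (swapF F) y x ↔ RelF F x y := by
  cases x <;> cases y
  · exact mem_swapF
  · exact Iff.rfl
  · exact Iff.rfl
  · constructor
    · intro h
      exact ⟨fun a ha => (h.2 a ha).imp (fun c hc => ⟨hc.1, mem_swapF.1 hc.2⟩),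
        fun c hc => (h.1 c hc).imp (fun a ha => ⟨ha.1, mem_swapF.1 ha.2⟩)⟩
    · intro h
      exact ⟨fun c hc => (h.2 c hc).imp (fun a ha => ⟨ha.1, mem_swapF.2 ha.2⟩),
        fun a ha => (h.1 a ha).imp (fun c hc => ⟨hc.1, mem_swapF.2 hc.2⟩)⟩

/-- Functionality of a partial isomorphism. -/
lemma pair_fun1 (hP : PIso b₁ b₂ n F) {u y y' : W} (h : (u, y) ∈ F) (h' : (u, y') ∈ F) :
    y = y' := congrArg Prod.snd (hP.inj1 _ h _ h' rfl)

lemma pair_fun2 (hP : PIso b₁ b₂ n F) {u u' y : W} (h : (u, y) ∈ F) (h' : (u', y) ∈ F) :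
    u = u' := congrArg Prod.fst (hP.inj2 _ h _ h' rfl)

lemma relf_set_right_inj (hP : PIso b₁ b₂ n F) {S : Finset (Tr b₁)} {T T' : Finset (Tr b₂)}
    (hST : (∀ a ∈ S, ∃ c ∈ T, (a.1, c.1) ∈ F) ∧ (∀ c ∈ T, ∃ a ∈ S, (a.1, c.1) ∈ F))
    (hST' : (∀ a ∈ S, ∃ c ∈ T', (a.1, c.1) ∈ F) ∧ (∀ c ∈ T', ∃ a ∈ S, (a.1, c.1) ∈ F)) :
    T = T' := by
  ext c
  constructor
  · intro hc
    obtain ⟨a, ha, hpair⟩ := hST.2 c hc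
    obtain ⟨c', hc', hpair'⟩ := hST'.1 a ha
    rw [show c = c' from Subtype.ext (pair_fun1 hP hpair hpair')]
    exact hc'
  · intro hc
    obtain ⟨a, ha, hpair⟩ := hST'.2 c hc
    obtain ⟨c', hc', hpair'⟩ := hST.1 a ha
    rw [show c = c' from Subtype.ext (pair_fun1 hP hpair hpair')]
    exact hc'

lemma relf_set_left_inj (hP : PIso b₁ b₂ n F) {S S' : Finset (Tr b₁)} {T : Finset (Tr b₂)}
    (hST : (∀ a ∈ S, ∃ c ∈ T, (a.1, c.1) ∈ F) ∧ (∀ c ∈ T, ∃ a ∈ S, (a.1, c.1) ∈ F))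
    (hST' : (∀ a ∈ S', ∃ c ∈ T, (a.1, c.1) ∈ F) ∧ (∀ c ∈ T, ∃ a ∈ S', (a.1, c.1) ∈ F)) :
    S = S' := by
  ext a
  constructor
  · intro ha
    obtain ⟨c, hc, hpair⟩ := hST.1 a ha
    obtain ⟨a', ha', hpair'⟩ := hST'.2 c hc
    rw [show a = a' from Subtype.ext (pair_fun2 hP hpair hpair')]
    exact ha'
  · intro ha
    obtain ⟨c, hc, hpair⟩ := hST'.1 a ha
    obtain ⟨a', ha', hpair'⟩ := hST.2 c hc
    rw [show a = a' from Subtype.ext (pair_fun2 hP hpair hpair')]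
    exact ha'

lemma relf_eq_iff (hP : PIso b₁ b₂ n F) {x x' : Mb b₁} {y y' : Mb b₂}
    (h0 : RelF F x y) (h1 : RelF F x' y') : x = x' ↔ y = y' := by
  cases x with
  | inl a =>
    obtain ⟨c, rfl, hac⟩ := h0.inl_dest
    cases x' with
    | inl a' =>
      obtain ⟨c', rfl, hac'⟩ := h1.inl_dest
      simp only [Sum.inl.injEq]
      refine Subtype.ext_iff.trans (Iff.trans ?_ Subtype.ext_iff.symm)
      exact hP.eq_iff hac hac'
    | inr S' =>
      obtain ⟨T', rfl, -⟩ := h1.inr_dest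
      simp
  | inr S =>
    obtain ⟨T, rfl, hST⟩ := h0.inr_dest
    cases x' with
    | inl a' =>
      obtain ⟨c', rfl, -⟩ := h1.inl_dest
      simp
    | inr S' =>
      obtain ⟨T', rfl, hST'⟩ := h1.inr_dest
      simp only [Sum.inr.injEq]
      constructor
      · rintro rfl
        exact relf_set_right_inj hP hST hST'
      · rintro rfl
        exact relf_set_left_inj hP hST hST'

lemma relf_le_iff (hP : PIso b₁ b₂ n F) {a a' : Tr b₁} {c c' : Tr b₂}
    (h0 : (a.1, c.1) ∈ F) (h1 : (a'.1, c'.1) ∈ F) : a ≤ a' ↔ c ≤ c' := by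
  rw [Tr.le_def, Tr.le_def]
  exact hP.prefix_iff h0 h1

lemma relf_bot_iff (hP : PIso b₁ b₂ n F) {a : Tr b₁} {c : Tr b₂}
    (h0 : (a.1, c.1) ∈ F) : a = ⊥ ↔ c = ⊥ := by
  refine Subtype.ext_iff.trans (Iff.trans ?_ Subtype.ext_iff.symm); rw [Tr.bot_def, Tr.bot_def]
  exact hP.nil_iff h0

lemma relf_mem_iff (hP : PIso b₁ b₂ n F) {a : Tr b₁} {c : Tr b₂}
    {S : Finset (Tr b₁)} {T : Finset (Tr b₂)} (h0 : (a.1, c.1) ∈ F)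
    (hST : (∀ a ∈ S, ∃ c ∈ T, (a.1, c.1) ∈ F) ∧ (∀ c ∈ T, ∃ a ∈ S, (a.1, c.1) ∈ F)) :
    a ∈ S ↔ c ∈ T := by
  constructor
  · intro ha
    obtain ⟨c', hc', hpair⟩ := hST.1 a ha
    rw [show c = c' from Subtype.ext (pair_fun1 hP h0 hpair)]
    exact hc'
  · intro hc
    obtain ⟨a', ha', hpair⟩ := hST.2 c hc
    rw [show a = a' from Subtype.ext (pair_fun2 hP h0 hpair)]
    exact ha'

/-- Simulation between configurations. -/
def SimC (b₁ b₂ : Bool) (n : ℕ) {k : ℕ} (v : Fin k → Mb b₁) (w : Fin k → Mb b₂) : Prop :=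
  ∃ F : Finset (W × W), PIso b₁ b₂ n F ∧ ∀ i, RelF F (v i) (w i)

lemma respond {F : Finset (W × W)} (hP : PIso b₁ b₂ (n + 1) F) (c : Mb b₂) :
    ∃ (F' : Finset (W × W)) (a : Mb b₁), F ⊆ F' ∧ PIso b₁ b₂ n F' ∧ RelF F' a c := by
  have hPs := hP.swap
  have hFsub : ∀ F₁ : Finset (W × W), swapF F ⊆ F₁ → F ⊆ swapF F₁ := by
    intro F₁ h p hp
    exact mem_swapF.2 (h (mem_swapF.2 (by simpa using hp)))
  cases c with
  | inl u =>
    obtain ⟨F₁, hsub, hP₁, hcov⟩ := extend_core hPs {u.1} (by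
      intro w hw
      rw [Finset.mem_singleton] at hw
      subst hw
      exact u.2)
    obtain ⟨y, hy⟩ := hcov u.1 (Finset.mem_singleton_self _)
    refine ⟨swapF F₁, Sum.inl ⟨y, hP₁.ok2 _ hy⟩, hFsub F₁ hsub, hP₁.swap, ?_⟩
    exact mem_swapF.2 (by simpa using hy)
  | inr T =>
    obtain ⟨F₁, hsub, hP₁, hcov⟩ := extend_core hPs (T.image (fun t => t.1)) (by
      intro w hw
      obtain ⟨t, ht, rfl⟩ := Finset.mem_image.1 hw
      exact t.2)
    set S : Finset (Tr b₁) := (F₁.filter (fun p => p.1 ∈ T.image (fun t => t.1))).attach.image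
      (fun p => (⟨p.1.2, hP₁.ok2 p.1 (Finset.mem_of_mem_filter _ p.2)⟩ : Tr b₁)) with hSdef
    refine ⟨swapF F₁, Sum.inr S, hFsub F₁ hsub, hP₁.swap, ?_, ?_⟩
    · intro a ha
      rw [hSdef] at ha
      obtain ⟨p, -, rfl⟩ := Finset.mem_image.1 ha
      have hpf := p.2
      rw [Finset.mem_filter] at hpf
      obtain ⟨t, ht, htv⟩ := Finset.mem_image.1 hpf.2
      refine ⟨t, ht, mem_swapF.2 ?_⟩
      simp only [htv]
      exact hpf.1
    · intro t ht
      obtain ⟨y, hy⟩ := hcov t.1 (Finset.mem_image.2 ⟨t, ht, rfl⟩)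
      have hpf : (t.1, y) ∈ F₁.filter (fun p => p.1 ∈ T.image (fun t => t.1)) :=
        Finset.mem_filter.2 ⟨hy, Finset.mem_image.2 ⟨t, ht, rfl⟩⟩
      refine ⟨⟨y, hP₁.ok2 _ hy⟩, ?_, mem_swapF.2 (by simpa using hy)⟩
      rw [hSdef]
      refine Finset.mem_image.2 ⟨⟨(t.1, y), hpf⟩, Finset.mem_attach _ _, rfl⟩

lemma move2 {k : ℕ} {v : Fin k → Mb b₁} {w : Fin k → Mb b₂}
    (h : SimC b₁ b₂ (n + 1) v w) (c : Mb b₂) :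
    ∃ a, SimC b₁ b₂ n (Fin.snoc v a) (Fin.snoc w c) := by
  obtain ⟨F, hP, hrel⟩ := h
  obtain ⟨F', a, hsub, hP', hr⟩ := respond hP c
  refine ⟨a, F', hP', fun i => ?_⟩
  refine Fin.lastCases ?_ (fun j => ?_) i
  · simpa [Fin.snoc_last] using hr
  · simp only [Fin.snoc_castSucc]
    exact RelF_mono hsub (hrel j)

lemma move1 {k : ℕ} {v : Fin k → Mb b₁} {w : Fin k → Mb b₂}
    (h : SimC b₁ b₂ (n + 1) v w) (a : Mb b₁) :
    ∃ c, SimC b₁ b₂ n (Fin.snoc v a) (Fin.snoc w c) := by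
  obtain ⟨F, hP, hrel⟩ := h
  obtain ⟨F₂, c, hsub, hP₂, hr⟩ := respond hP.swap a
  refine ⟨c, swapF F₂, hP₂.swap, fun i => ?_⟩
  refine Fin.lastCases ?_ (fun j => ?_) i
  · simp only [Fin.snoc_last]
    exact RelF_swap.2 hr
  · simp only [Fin.snoc_castSucc]
    exact RelF_swap.2 (RelF_mono hsub (RelF_swap.2 (hrel j)))

end Companion
end PaperAux

namespace PaperAux
open Paper
open FirstOrder
open scoped Classical

section EF

variable {b : Bool}

lemma term_is_var {k : ℕ} (t : (msoLang treeLang).Term (Empty ⊕ Fin k)) :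
    ∃ i : Fin k, t = Language.Term.var (Sum.inr i) := by
  cases t with
  | var a =>
    rcases a with e | i
    · exact e.elim
    · exact ⟨i, rfl⟩
  | func f ts => exact Empty.elim f

lemma relmap_sort_iff (xf : Fin 1 → Mb b) :
    (Language.Structure.RelMap (L := msoLang treeLang) (M := Mb b)
      (Sum.inr MSORel.sort) xf) ↔ ∃ a : Tr b, xf 0 = Sum.inl a :=
  Iff.rfl

lemma relmap_mem_iff (xf : Fin 2 → Mb b) :
    (Language.Structure.RelMap (L := msoLang treeLang) (M := Mb b)
      (Sum.inr MSORel.mem) xf) ↔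
      ∃ (a : Tr b) (S : Finset (Tr b)), xf 0 = Sum.inl a ∧ xf 1 = Sum.inr S ∧ a ∈ S :=
  Iff.rfl

lemma relmap_le_iff (xf : Fin 2 → Mb b) :
    (Language.Structure.RelMap (L := msoLang treeLang) (M := Mb b)
      (Sum.inl TreeRel.le) xf) ↔
      ∃ a a' : Tr b, xf 0 = Sum.inl a ∧ xf 1 = Sum.inl a' ∧ a ≤ a' := by
  constructor
  · rintro ⟨z, hz, hle⟩
    exact ⟨z 0, z 1, congrFun hz 0, congrFun hz 1, hle⟩
  · rintro ⟨a, a', h0, h1, hle⟩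
    refine ⟨![a, a'], ?_, ?_⟩
    · funext i
      fin_cases i
      · exact h0
      · exact h1
    · exact hle

lemma relmap_root_iff (xf : Fin 1 → Mb b) :
    (Language.Structure.RelMap (L := msoLang treeLang) (M := Mb b)
      (Sum.inl TreeRel.root) xf) ↔
      ∃ a : Tr b, xf 0 = Sum.inl a ∧ a = ⊥ := by
  constructor
  · rintro ⟨z, hz, hroot⟩
    exact ⟨z 0, congrFun hz 0, hroot⟩
  · rintro ⟨a, h0, hroot⟩
    refine ⟨![a], ?_, ?_⟩
    · funext i
      fin_cases i
      exact h0
    · exact hroot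

section Transfers

variable {b₁ b₂ : Bool} {n : ℕ} {F : Finset (W × W)}

lemma transfer_sort (hP : PIso b₁ b₂ n F) (xf : Fin 1 → Mb b₁) (yf : Fin 1 → Mb b₂)
    (hrel : ∀ i, RelF F (xf i) (yf i)) :
    (Language.Structure.RelMap (L := msoLang treeLang) (Sum.inr MSORel.sort) xf) ↔
    (Language.Structure.RelMap (L := msoLang treeLang) (Sum.inr MSORel.sort) yf) := by
  rw [relmap_sort_iff, relmap_sort_iff]
  constructor
  · rintro ⟨a, ha⟩
    have h := hrel 0
    rw [ha] at h
    obtain ⟨c, hc, -⟩ := h.inl_dest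
    exact ⟨c, hc⟩
  · rintro ⟨c, hc⟩
    have h := hrel 0
    rw [hc] at h
    obtain ⟨a, ha, -⟩ := h.inl_dest'
    exact ⟨a, ha⟩

lemma transfer_le (hP : PIso b₁ b₂ n F) (xf : Fin 2 → Mb b₁) (yf : Fin 2 → Mb b₂)
    (hrel : ∀ i, RelF F (xf i) (yf i)) :
    (Language.Structure.RelMap (L := msoLang treeLang) (Sum.inl TreeRel.le) xf) ↔
    (Language.Structure.RelMap (L := msoLang treeLang) (Sum.inl TreeRel.le) yf) := by
  rw [relmap_le_iff, relmap_le_iff]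
  constructor
  · rintro ⟨a, a', h0, h1, hle⟩
    have r0 := hrel 0
    have r1 := hrel 1
    rw [h0] at r0
    rw [h1] at r1
    obtain ⟨c, hc, hac⟩ := r0.inl_dest
    obtain ⟨c', hc', hac'⟩ := r1.inl_dest
    exact ⟨c, c', hc, hc', (relf_le_iff hP hac hac').1 hle⟩
  · rintro ⟨c, c', h0, h1, hle⟩
    have r0 := hrel 0
    have r1 := hrel 1
    rw [h0] at r0
    rw [h1] at r1
    obtain ⟨a, ha, hac⟩ := r0.inl_dest'
    obtain ⟨a', ha', hac'⟩ := r1.inl_dest'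
    exact ⟨a, a', ha, ha', (relf_le_iff hP hac hac').2 hle⟩

lemma transfer_root (hP : PIso b₁ b₂ n F) (xf : Fin 1 → Mb b₁) (yf : Fin 1 → Mb b₂)
    (hrel : ∀ i, RelF F (xf i) (yf i)) :
    (Language.Structure.RelMap (L := msoLang treeLang) (Sum.inl TreeRel.root) xf) ↔
    (Language.Structure.RelMap (L := msoLang treeLang) (Sum.inl TreeRel.root) yf) := by
  rw [relmap_root_iff, relmap_root_iff]
  constructor
  · rintro ⟨a, h0, hbot⟩
    have r0 := hrel 0
    rw [h0] at r0
    obtain ⟨c, hc, hac⟩ := r0.inl_dest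
    exact ⟨c, hc, (relf_bot_iff hP hac).1 hbot⟩
  · rintro ⟨c, h0, hbot⟩
    have r0 := hrel 0
    rw [h0] at r0
    obtain ⟨a, ha, hac⟩ := r0.inl_dest'
    exact ⟨a, ha, (relf_bot_iff hP hac).2 hbot⟩

lemma transfer_mem (hP : PIso b₁ b₂ n F) (xf : Fin 2 → Mb b₁) (yf : Fin 2 → Mb b₂)
    (hrel : ∀ i, RelF F (xf i) (yf i)) :
    (Language.Structure.RelMap (L := msoLang treeLang) (Sum.inr MSORel.mem) xf) ↔
    (Language.Structure.RelMap (L := msoLang treeLang) (Sum.inr MSORel.mem) yf) := by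
  rw [relmap_mem_iff, relmap_mem_iff]
  constructor
  · rintro ⟨a, S, h0, h1, hmem⟩
    have r0 := hrel 0
    have r1 := hrel 1
    rw [h0] at r0
    rw [h1] at r1
    obtain ⟨c, hc, hac⟩ := r0.inl_dest
    obtain ⟨T, hT, hST⟩ := r1.inr_dest
    exact ⟨c, T, hc, hT, (relf_mem_iff hP hac hST).1 hmem⟩
  · rintro ⟨c, T, h0, h1, hmem⟩
    have r0 := hrel 0
    have r1 := hrel 1
    rw [h0] at r0
    rw [h1] at r1
    obtain ⟨a, ha, hac⟩ := r0.inl_dest'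
    obtain ⟨S, hS, hST⟩ := r1.inr_dest'
    exact ⟨a, S, ha, hS, (relf_mem_iff hP hac hST).2 hmem⟩

end Transfers

theorem ef {k : ℕ} (φ : (msoLang treeLang).BoundedFormula Empty k) :
    ∃ q : ℕ, ∀ (b₁ b₂ : Bool) (n : ℕ), q ≤ n →
      ∀ (e₁ : Empty → Mb b₁) (e₂ : Empty → Mb b₂) (v : Fin k → Mb b₁) (w : Fin k → Mb b₂),
        SimC b₁ b₂ n v w → (φ.Realize e₁ v ↔ φ.Realize e₂ w) := by
  induction φ with
  | falsum =>
    exact ⟨0, fun b₁ b₂ n _ e₁ e₂ v w _ => Iff.rfl⟩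
  | equal t₁ t₂ =>
    refine ⟨0, fun b₁ b₂ n _ e₁ e₂ v w hsim => ?_⟩
    obtain ⟨F, hP, hrel⟩ := hsim
    obtain ⟨i, rfl⟩ := term_is_var t₁
    obtain ⟨j, rfl⟩ := term_is_var t₂
    have h1 : (Language.BoundedFormula.equal (L := msoLang treeLang)
        (Language.Term.var (Sum.inr i)) (Language.Term.var (Sum.inr j))).Realize e₁ v ↔
        v i = v j := by
      rw [show (Language.BoundedFormula.equal (L := msoLang treeLang)
        (Language.Term.var (Sum.inr i)) (Language.Term.var (Sum.inr j))) =
        Language.Term.bdEqual (Language.Term.var (Sum.inr i))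
          (Language.Term.var (Sum.inr j)) from rfl]
      rw [Language.BoundedFormula.realize_bdEqual]
      simp [Language.Term.realize_var]
    have h2 : (Language.BoundedFormula.equal (L := msoLang treeLang)
        (Language.Term.var (Sum.inr i)) (Language.Term.var (Sum.inr j))).Realize e₂ w ↔
        w i = w j := by
      rw [show (Language.BoundedFormula.equal (L := msoLang treeLang)
        (Language.Term.var (Sum.inr i)) (Language.Term.var (Sum.inr j))) =
        Language.Term.bdEqual (Language.Term.var (Sum.inr i))
          (Language.Term.var (Sum.inr j)) from rfl]
      rw [Language.BoundedFormula.realize_bdEqual]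
      simp [Language.Term.realize_var]
    rw [h1, h2]
    exact relf_eq_iff hP (hrel i) (hrel j)
  | @rel k' l R ts =>
    refine ⟨0, fun b₁ b₂ n _ e₁ e₂ v w hsim => ?_⟩
    obtain ⟨F, hP, hrel⟩ := hsim
    choose σ hσ using fun i => term_is_var (ts i)
    have h1 : (Language.BoundedFormula.rel R ts).Realize e₁ v ↔
        Language.Structure.RelMap R (fun i => v (σ i)) := by
      rw [show (Language.BoundedFormula.rel R ts) = R.boundedFormula ts from rfl]
      rw [Language.BoundedFormula.realize_rel]
      have he : (fun i => Language.Term.realize (Sum.elim e₁ v) (ts i)) = fun i => v (σ i) := by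
        funext i
        rw [hσ i]
        simp [Language.Term.realize_var]
      rw [he]
    have h2 : (Language.BoundedFormula.rel R ts).Realize e₂ w ↔
        Language.Structure.RelMap R (fun i => w (σ i)) := by
      rw [show (Language.BoundedFormula.rel R ts) = R.boundedFormula ts from rfl]
      rw [Language.BoundedFormula.realize_rel]
      have he : (fun i => Language.Term.realize (Sum.elim e₂ w) (ts i)) = fun i => w (σ i) := by
        funext i
        rw [hσ i]
        simp [Language.Term.realize_var]
      rw [he]
    rw [h1, h2]
    have hrel' : ∀ i, RelF F (v (σ i)) (w (σ i)) := fun i => hrel (σ i)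
    rcases R with R | R
    · cases R
      · exact transfer_le hP _ _ hrel'
      · exact transfer_root hP _ _ hrel'
    · cases R
      · exact transfer_sort hP _ _ hrel'
      · exact transfer_mem hP _ _ hrel'
  | imp φ₁ φ₂ ih₁ ih₂ =>
    obtain ⟨q₁, h₁⟩ := ih₁
    obtain ⟨q₂, h₂⟩ := ih₂
    refine ⟨max q₁ q₂, fun b₁ b₂ n hn e₁ e₂ v w hsim => ?_⟩
    have hr1 := h₁ b₁ b₂ n (le_trans (le_max_left _ _) hn) e₁ e₂ v w hsim
    have hr2 := h₂ b₁ b₂ n (le_trans (le_max_right _ _) hn) e₁ e₂ v w hsim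
    rw [Language.BoundedFormula.realize_imp, Language.BoundedFormula.realize_imp]
    tauto
  | all φ' ih =>
    obtain ⟨q₀, h₀⟩ := ih
    refine ⟨q₀ + 1, fun b₁ b₂ n hn e₁ e₂ v w hsim => ?_⟩
    obtain ⟨m, rfl⟩ : ∃ m, n = m + 1 := ⟨n - 1, by omega⟩
    rw [Language.BoundedFormula.realize_all, Language.BoundedFormula.realize_all]
    constructor
    · intro hall c
      obtain ⟨a, hsim'⟩ := move2 hsim c
      exact (h₀ b₁ b₂ m (by omega) e₁ e₂ _ _ hsim').1 (hall a)
    · intro hall a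
      obtain ⟨c, hsim'⟩ := move1 hsim a
      exact (h₀ b₁ b₂ m (by omega) e₁ e₂ _ _ hsim').2 (hall c)

theorem companion_equiv (φ : (msoLang treeLang).Sentence) :
    ((Tr false ⊕ Finset (Tr false)) ⊨ φ) ↔ ((Tr true ⊕ Finset (Tr true)) ⊨ φ) := by
  obtain ⟨q, hq⟩ := ef φ
  exact hq false true q le_rfl _ _ _ _
    ⟨{(([] : W), ([] : W))}, piso_init false true q, fun i => i.elim0⟩

end EF
end PaperAux

end
end AuxDev

namespace Paper

/-- the existence of an infinite branch is not expressible in weak monadic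
second-order logic: no first-order sentence over the weak-MSO companion language of trees
holds in the weak-MSO companion of a tree `V` exactly when `V` has an infinite branch. -/
theorem infinite_branch_not_weakMSO_expressible :
    ¬ ∃ φ : (msoLang treeLang).Sentence,
        ∀ (V : Type) [PartialOrder V] [OrderBot V], IsTree V →
          ((V ⊕ Finset V) ⊨ φ ↔ ∃ f : ℕ → V, StrictMono f)     := by
  rintro ⟨φ, hφ⟩
  have hT : IsTree (PaperAux.Tr true) := ⟨fun v => PaperAux.finite_below v, PaperAux.linear_below⟩
  have hF : IsTree (PaperAux.Tr false) := ⟨fun v => PaperAux.finite_below v, PaperAux.linear_below⟩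
  have h1 := hφ (PaperAux.Tr true) hT
  have h0 := hφ (PaperAux.Tr false) hF
  have hsat : (PaperAux.Tr true ⊕ Finset (PaperAux.Tr true)) ⊨ φ := h1.2 PaperAux.branch_true
  have h2 : (PaperAux.Tr false ⊕ Finset (PaperAux.Tr false)) ⊨ φ :=
    (PaperAux.companion_equiv φ).2 hsat
  exact PaperAux.branch_false (h0.1 h2)


end Paper
end

section
/- Let α be a finite alphabet and let M be a DFA over α with finite state type Q. Then the language M.accepts ⊆ List α is a multichain (with respect to the prefix order) if and only if every branching point of ↓M.accepts has length strictly less than Fintype.card Q. (Automata-theoretic characterization underlying the first-order definability of 'L(M) is a multichain' from the transition matrix.) -/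
namespace Paper

/-- A set of words is a chain if any two of its elements are comparable
under the prefix relation. -/
def IsPrefixChain {α : Type} (S : Set (List α)) : Prop :=
  ∀ u ∈ S, ∀ v ∈ S, u <+: v ∨ v <+: u

/-- A set of words is a multichain if it is a finite union of chains. -/
def IsMultichain {α : Type} (S : Set (List α)) : Prop :=
  ∃ (n : ℕ) (C : Fin n → Set (List α)), (∀ i, IsPrefixChain (C i)) ∧ S = ⋃ i, C i

/-- The downward (prefix) closure `↓L` of a set `L` of words. -/
def downcl {α : Type} (L : Set (List α)) : Set (List α) := {u | ∃ v ∈ L, u <+: v}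

/-- `x ∈ M` is a branching point of `M` if the set of elements of `M` strictly above `x`
is nonempty and has no least element with respect to the prefix order. -/
def IsBranchingPoint {α : Type} (M : Set (List α)) (x : List α) : Prop :=
  x ∈ M ∧ {y ∈ M | x <+: y ∧ x ≠ y}.Nonempty ∧
    ¬ ∃ z ∈ {y ∈ M | x <+: y ∧ x ≠ y}, ∀ y ∈ {y ∈ M | x <+: y ∧ x ≠ y}, z <+: y

end Paper
namespace Paper

/-- `k`-fold repetition of a word. -/
def npw {α : Type} (q : List α) : ℕ → List α
  | 0 => []
  | k+1 => q ++ npw q k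

lemma npw_add {α : Type} (q : List α) (k l : ℕ) :
    npw q (k + l) = npw q k ++ npw q l := by
  induction k with
  | zero => simp [npw]
  | succ k ih => rw [Nat.succ_add]; simp [npw, ih]

lemma npw_length {α : Type} (q : List α) (k : ℕ) :
    (npw q k).length = k * q.length := by
  induction k with
  | zero => simp [npw]
  | succ k ih => simp [npw, ih]; ring

lemma downcl_closed {α : Type} {L : Set (List α)} {u v : List α}
    (h : v ∈ downcl L) (huv : u <+: v) : u ∈ downcl L := by
  obtain ⟨w, hw, hvw⟩ := h
  exact ⟨w, hw, huv.trans hvw⟩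

lemma mem_downcl_self {α : Type} {L : Set (List α)} {u : List α} (h : u ∈ L) :
    u ∈ downcl L := ⟨u, h, List.prefix_refl u⟩

/-- A word is a branching point of a downward-closed set iff it has two distinct
one-letter extensions in the set. -/
lemma branching_iff {α : Type} (L : Set (List α)) (x : List α) :
    IsBranchingPoint (downcl L) x ↔
      x ∈ downcl L ∧ ∃ a b : α, a ≠ b ∧ x ++ [a] ∈ downcl L ∧ x ++ [b] ∈ downcl L := by
  constructor
  · rintro ⟨hx, ⟨y, hy, hxy, hne⟩, hnl⟩
    obtain ⟨s, rfl⟩ := hxy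
    have hs : s ≠ [] := by rintro rfl; exact hne (by simp)
    obtain ⟨a, s', rfl⟩ := List.exists_cons_of_ne_nil hs
    have hxa : x ++ [a] ∈ downcl L := downcl_closed hy ⟨s', by simp⟩
    have hxaS : x ++ [a] ∈ {y ∈ downcl L | x <+: y ∧ x ≠ y} := by
      refine ⟨hxa, List.prefix_append _ _, fun h => ?_⟩
      have := congrArg List.length h; simp at this
    push_neg at hnl
    obtain ⟨y', hy'S, hy'⟩ := hnl (x ++ [a]) hxaS
    obtain ⟨hy'D, hxy', hney'⟩ := hy'S
    obtain ⟨t, rfl⟩ := hxy'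
    have ht : t ≠ [] := by rintro rfl; exact hney' (by simp)
    obtain ⟨b, t', rfl⟩ := List.exists_cons_of_ne_nil ht
    have hab : a ≠ b := by
      rintro rfl
      exact hy' (by simp [List.prefix_append_right_inj])
    exact ⟨hx, a, b, hab, hxa, downcl_closed hy'D ⟨t', by simp⟩⟩
  · rintro ⟨hx, a, b, hab, ha, hb⟩
    have hmem : ∀ c : α, x ++ [c] ∈ downcl L →
        x ++ [c] ∈ {y ∈ downcl L | x <+: y ∧ x ≠ y} := by
      intro c hc
      refine ⟨hc, List.prefix_append _ _, fun h => ?_⟩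
      have := congrArg List.length h; simp at this
    refine ⟨hx, ⟨x ++ [a], hmem a ha⟩, ?_⟩
    rintro ⟨z, ⟨hzD, hxz, hxnez⟩, hleast⟩
    obtain ⟨s, rfl⟩ := hxz
    have hs : s ≠ [] := by rintro rfl; exact hxnez (by simp)
    have hza := hleast _ (hmem a ha)
    have hzb := hleast _ (hmem b hb)
    rw [List.prefix_append_right_inj] at hza hzb
    have h1 : 1 ≤ s.length := by
      cases s with | nil => exact absurd rfl hs | cons c cs => simp
    have hsa : s = [a] := hza.eq_of_length (by simpa using le_antisymm (by simpa using hza.length_le) h1)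
    have hsb : s = [b] := hzb.eq_of_length (by simpa using le_antisymm (by simpa using hzb.length_le) h1)
    rw [hsa] at hsb
    exact hab (by simpa using hsb)

/-- In a downward-closed set where no word of length ≥ N has two distinct one-letter
extensions, all extensions of a fixed word of length ≥ N are linearly ordered. -/
lemma chain_above {α : Type} {D : Set (List α)}
    (hD : ∀ u v : List α, v ∈ D → u <+: v → u ∈ D) {N : ℕ}
    (H : ∀ x ∈ D, N ≤ x.length → ∀ a b : α, x ++ [a] ∈ D → x ++ [b] ∈ D → a = b)
    {y₀ : List α} (hy : N ≤ y₀.length) :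
    ∀ s : List α, y₀ ++ s ∈ D → ∀ v ∈ D, y₀ <+: v → (y₀ ++ s).length ≤ v.length →
      y₀ ++ s <+: v := by
  intro s
  induction s using List.reverseRecOn with
  | nil => intro _ v _ hyv _; simpa using hyv
  | append_singleton s c ih =>
    intro hu v hv hyv hle
    rw [← List.append_assoc] at hu hle ⊢
    have hu' : y₀ ++ s ∈ D := hD _ _ hu (List.prefix_append _ _)
    have hlt : (y₀ ++ s).length < v.length := by
      simp only [List.length_append, List.length_singleton] at hle ⊢; omega
    have hps : y₀ ++ s <+: v := ih hu' v hv hyv hlt.le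
    have htake : v.take ((y₀ ++ s).length) = y₀ ++ s := (List.prefix_iff_eq_take.mp hps).symm
    have htk1 : v.take ((y₀ ++ s).length + 1) = (y₀ ++ s) ++ [v[(y₀ ++ s).length]'hlt] := by
      rw [List.take_succ, htake, List.getElem?_eq_getElem hlt]; rfl
    have hmemtk : (y₀ ++ s) ++ [v[(y₀ ++ s).length]'hlt] ∈ D := by
      rw [← htk1]; exact hD _ _ hv (List.take_prefix _ _)
    have hcc : c = v[(y₀ ++ s).length]'hlt :=
      H (y₀ ++ s) hu' (by simp only [List.length_append]; omega) c _ hu hmemtk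
    rw [hcc, ← htk1]
    exact List.take_prefix _ _

lemma isMultichain_of_fintype {α ι : Type} [Fintype ι] {S : Set (List α)}
    (C : ι → Set (List α)) (hchain : ∀ i, IsPrefixChain (C i)) (hS : S = ⋃ i, C i) :
    IsMultichain S := by
  refine ⟨Fintype.card ι, fun i => C ((Fintype.equivFin ι).symm i), fun i => hchain _, ?_⟩
  rw [hS]
  ext x
  simp only [Set.mem_iUnion]
  constructor
  · rintro ⟨i, h⟩
    exact ⟨Fintype.equivFin ι i, by simpa using h⟩
  · rintro ⟨j, h⟩
    exact ⟨_, h⟩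

/-- for a DFA `M` over a finite alphabet with finite state type `Q`, the
accepted language is a multichain iff every branching point of `↓L(M)` has length strictly
less than `Fintype.card Q`. -/
theorem accepts_multichain_iff_branching_short
    (α Q : Type) [Fintype α] [Fintype Q] (M : DFA α Q) :
    IsMultichain {w : List α | w ∈ M.accepts} ↔
      ∀ x : List α, IsBranchingPoint (downcl {w : List α | w ∈ M.accepts}) x →
        x.length < Fintype.card Q := by
  set L : Set (List α) := {w : List α | w ∈ M.accepts} with hL
  set N := Fintype.card Q with hN
  constructor
  · rintro ⟨n, C, hC, hCU⟩ x hxbr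
    by_contra hshort
    have hxlen : N ≤ x.length := not_lt.1 hshort
    obtain ⟨hxD, a, b, hab, ha, hb⟩ := (branching_iff L x).mp hxbr
    obtain ⟨q, P, Qs, R, hsplit, -, hQs, hP, hQ, hR⟩ :=
      M.evalFrom_split (s := M.start) (t := M.eval x) hxlen rfl
    have hQl : 0 < Qs.length := List.length_pos_iff.mpr hQs
    -- pumping
    have pump : ∀ (k : ℕ) (z : List α), M.evalFrom q (npw Qs k ++ z) = M.evalFrom q z := by
      intro k
      induction k with
      | zero => intro z; simp [npw]
      | succ k ih =>
        intro z
        rw [show npw Qs (k+1) ++ z = Qs ++ (npw Qs k ++ z) by simp [npw]]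
        rw [DFA.evalFrom_of_append, hQ, ih]
    have hmem : ∀ (c : α) (t : List α), x ++ ([c] ++ t) ∈ M.accepts →
        ∀ k : ℕ, (P ++ (npw Qs k ++ (R ++ ([c] ++ t)))) ∈ M.accepts := by
      intro c t h k
      rw [DFA.mem_accepts] at h ⊢
      have hx' : M.eval (x ++ ([c] ++ t)) = M.evalFrom (M.evalFrom q R) ([c] ++ t) := by
        rw [hR, DFA.eval, DFA.evalFrom_of_append]
      rw [hx'] at h
      show M.evalFrom M.start _ ∈ M.accept
      rw [DFA.evalFrom_of_append, hP, pump, DFA.evalFrom_of_append, hR,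
        show M.eval x = M.evalFrom q R from hR.symm ▸ rfl]
      · exact hR ▸ h
    -- key periodicity extraction
    have key : ∀ (c : α) (t : List α),
        (∀ k : ℕ, (P ++ (npw Qs k ++ (R ++ ([c] ++ t)))) ∈ M.accepts) →
        ∃ K, R ++ ([c] ++ t) <+: npw Qs K := by
      intro c t hall
      set s₀ := R ++ ([c] ++ t) with hs₀
      have hex : ∀ k : Fin (n+1), ∃ i : Fin n, (P ++ (npw Qs (k:ℕ) ++ s₀)) ∈ C i := by
        intro k
        have h1 : (P ++ (npw Qs (k:ℕ) ++ s₀)) ∈ ⋃ i, C i := hCU ▸ (hall k)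
        exact Set.mem_iUnion.mp h1
      choose f hf using hex
      obtain ⟨k, l, hkl, hfkl⟩ :=
        Fintype.exists_ne_map_eq_of_card_lt f (by simp)
      obtain ⟨k, l, hlt, hfe⟩ : ∃ k l : Fin (n+1), k < l ∧ f k = f l := by
        rcases Ne.lt_or_gt hkl with h | h
        exacts [⟨k, l, h, hfkl⟩, ⟨l, k, h, hfkl.symm⟩]
      have hcomp := hC (f k) _ (hf k) _ (hfe ▸ hf l)
      have hlenlt : (P ++ (npw Qs (k:ℕ) ++ s₀)).length < (P ++ (npw Qs (l:ℕ) ++ s₀)).length := by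
        simp only [List.length_append, npw_length]
        have : (k:ℕ) * Qs.length < (l:ℕ) * Qs.length :=
          Nat.mul_lt_mul_of_lt_of_le hlt le_rfl hQl
        omega
      have hpre : (P ++ (npw Qs (k:ℕ) ++ s₀)) <+: (P ++ (npw Qs (l:ℕ) ++ s₀)) := by
        rcases hcomp with h | h
        · exact h
        · exact absurd h.length_le (not_le.mpr hlenlt)
      set m := (l:ℕ) - (k:ℕ) with hm
      have hm1 : 1 ≤ m := by
        have : (k:ℕ) < (l:ℕ) := hlt
        omega
      have hls : (l:ℕ) = (k:ℕ) + m := by omega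
      rw [hls, npw_add, List.append_assoc, List.prefix_append_right_inj,
        List.prefix_append_right_inj] at hpre
      -- hpre : s₀ <+: npw Qs m ++ s₀
      have hiter : ∀ j : ℕ, s₀ <+: npw Qs (j * m) ++ s₀ := by
        intro j
        induction j with
        | zero => simp [npw]
        | succ j ih =>
          have h2 : npw Qs (j * m) ++ s₀ <+: npw Qs (j * m) ++ (npw Qs m ++ s₀) :=
            (List.prefix_append_right_inj _).mpr hpre
          have h3 := ih.trans h2
          rw [← List.append_assoc, ← npw_add] at h3
          rw [show (j+1) * m = j * m + m by ring]
          exact h3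
      refine ⟨s₀.length * m, List.prefix_of_prefix_length_le (hiter s₀.length)
        (List.prefix_append _ _) ?_⟩
      rw [npw_length]
      calc s₀.length = s₀.length * 1 * 1 := by ring
        _ ≤ s₀.length * m * Qs.length :=
          Nat.mul_le_mul (Nat.mul_le_mul le_rfl hm1) hQl
    -- apply to both branches
    obtain ⟨wa, hwaL, ta, hta⟩ := ha
    obtain ⟨wb, hwbL, tb, htb⟩ := hb
    have hwa : x ++ ([a] ++ ta) ∈ M.accepts := by
      have : wa ∈ M.accepts := hwaL
      rwa [← hta, List.append_assoc] at this
    have hwb : x ++ ([b] ++ tb) ∈ M.accepts := by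
      have : wb ∈ M.accepts := hwbL
      rwa [← htb, List.append_assoc] at this
    obtain ⟨Ka, hKa⟩ := key a ta (hmem a ta hwa)
    obtain ⟨Kb, hKb⟩ := key b tb (hmem b tb hwb)
    have hKa' : npw Qs Ka <+: npw Qs (Ka + Kb) := by
      rw [npw_add]; exact List.prefix_append _ _
    have hKb' : npw Qs Kb <+: npw Qs (Ka + Kb) := by
      rw [Nat.add_comm, npw_add]; exact List.prefix_append _ _
    have h1 : R ++ [a] <+: npw Qs (Ka + Kb) := by
      have : R ++ [a] <+: R ++ ([a] ++ ta) := by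
        rw [← List.append_assoc]; exact List.prefix_append _ _
      exact (this.trans hKa).trans hKa'
    have h2 : R ++ [b] <+: npw Qs (Ka + Kb) := by
      have : R ++ [b] <+: R ++ ([b] ++ tb) := by
        rw [← List.append_assoc]; exact List.prefix_append _ _
      exact (this.trans hKb).trans hKb'
    have h3 : R ++ [a] = R ++ [b] :=
      (List.prefix_of_prefix_length_le h1 h2 (by simp)).eq_of_length (by simp)
    exact hab (by simpa using List.append_cancel_left h3)
  · intro hbr
    have hD : ∀ u v : List α, v ∈ downcl L → u <+: v → u ∈ downcl L :=
      fun u v hv huv => downcl_closed hv huv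
    have H : ∀ x ∈ downcl L, N ≤ x.length →
        ∀ a b : α, x ++ [a] ∈ downcl L → x ++ [b] ∈ downcl L → a = b := by
      intro x hx hxl a b ha hb
      by_contra hne
      exact absurd (hbr x ((branching_iff L x).mpr ⟨hx, a, b, hne, ha, hb⟩))
        (not_lt.mpr hxl)
    haveI : Fintype {y : List α // y.length ≤ N} :=
      (List.finite_length_le α N).fintype
    set C : {y : List α // y.length ≤ N} → Set (List α) :=
      fun y₀ => {y | y ∈ L ∧ y₀.1 <+: y ∧ (y₀.1.length < N → y = y₀.1)} with hCdef
    apply isMultichain_of_fintype C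
    · rintro ⟨y₀, hy₀⟩ u ⟨huL, hyu, hcu⟩ v ⟨hvL, hyv, hcv⟩
      by_cases hlt : y₀.length < N
      · rw [hcu hlt, hcv hlt]
        exact Or.inl (List.prefix_refl _)
      · have hge : N ≤ y₀.length := not_lt.1 hlt
        obtain ⟨su, rfl⟩ := hyu
        obtain ⟨sv, rfl⟩ := hyv
        rcases le_total (y₀ ++ su).length (y₀ ++ sv).length with h | h
        · exact Or.inl (chain_above hD H hge su (mem_downcl_self huL) _
            (mem_downcl_self hvL) (List.prefix_append _ _) h)
        · exact Or.inr (chain_above hD H hge sv (mem_downcl_self hvL) _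
            (mem_downcl_self huL) (List.prefix_append _ _) h)
    · ext y
      simp only [Set.mem_iUnion]
      constructor
      · intro hy
        by_cases h : y.length < N
        · exact ⟨⟨y, h.le⟩, hy, List.prefix_refl _, fun _ => rfl⟩
        · refine ⟨⟨y.take N, by simp⟩, hy, List.take_prefix _ _, fun hc => ?_⟩
          exfalso
          rw [List.length_take] at hc
          omega
      · rintro ⟨i, hy, -, -⟩
        exact hy

end Paper
end

section
/- Finiteness of a multichain is uniformly first-order definable in the multichain companion: there is a first-order formula φ(X) with one free variable, over the language with a unary sort predicate, a binary membership relation ∈, and a binary relation ⪯, such that for every type A and every multichain S ⊆ List A, the multichain companion of (List A, ⪯) satisfies φ at inr S if and only if S is finite. -/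
open FirstOrder

namespace Paper

/-- The language with a single binary relation symbol `⪯`. -/
inductive PrefRel : ℕ → Type
  | pre : PrefRel 2

/-- The language with a single binary relation symbol `⪯`. -/
def prefLang : Language where
  Functions _ := Empty
  Relations := PrefRel

instance : prefLang.IsRelational := fun _ => inferInstanceAs (IsEmpty Empty)

/-- `(List A, ⪯)` as a structure for `prefLang`. -/
instance prefStructure (A : Type) : prefLang.Structure (List A) where
  funMap f := f.elim
  RelMap {n} r := match n, r with
    | 2, PrefRel.pre => fun x => x 0 <+: x 1

/-- A multichain is finite iff every element lies below a maximal element. -/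
theorem multichain_max_iff_finite {A : Type} {S : Set (List A)} (hS : IsMultichain S) :
    (∀ x ∈ S, ∃ m ∈ S, x <+: m ∧ ∀ y ∈ S, m <+: y → y <+: m) ↔ S.Finite := by
  constructor
  · intro h
    classical
    obtain ⟨n, C, hC, rfl⟩ := hS
    set S : Set (List A) := ⋃ i, C i with hSdef
    set M : Set (List A) := {m | m ∈ S ∧ ∀ y ∈ S, m <+: y → y = m} with hMdef
    have hMfin : M.Finite := by
      have hidx : ∀ m : M, ∃ i, (m : List A) ∈ C i := fun m => Set.mem_iUnion.mp m.2.1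
      set f : M → Fin n := fun m => Classical.choose (hidx m) with hf
      have hinj : Function.Injective f := by
        intro m₁ m₂ hEq
        have h₁ : (m₁ : List A) ∈ C (f m₁) := Classical.choose_spec (hidx m₁)
        have h₂ : (m₂ : List A) ∈ C (f m₂) := Classical.choose_spec (hidx m₂)
        rw [hEq] at h₁
        rcases hC _ _ h₁ _ h₂ with hp | hp
        · exact Subtype.ext ((m₁.2.2 _ m₂.2.1 hp).symm)
        · exact Subtype.ext (m₂.2.2 _ m₁.2.1 hp)
      haveI : Finite M := Finite.of_injective f hinj
      exact Set.toFinite M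
    have hsub : S ⊆ ⋃ m ∈ M, {u | u ∈ m.inits} := by
      intro x hx
      obtain ⟨m, hmS, hxm, hmax⟩ := h x hx
      have hmM : m ∈ M := by
        refine ⟨hmS, fun y hy hmy => ?_⟩
        exact (hmax y hy hmy).eq_of_length
          (le_antisymm (hmax y hy hmy).length_le hmy.length_le)
      exact Set.mem_biUnion hmM ((List.mem_inits _ _).mpr hxm)
    exact Set.Finite.subset (hMfin.biUnion fun m _ => List.finite_toSet m.inits) hsub
  · intro hfin x hx
    have hTfin : Set.Finite {v ∈ S | x <+: v} := hfin.subset (Set.sep_subset _ _)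
    obtain ⟨m, hmT, hmax'⟩ := hTfin.exists_maximalFor List.length _ ⟨x, hx, List.prefix_rfl⟩
    have hmax : ∀ y ∈ {v ∈ S | x <+: v}, m.length ≤ y.length → m.length = y.length :=
      fun y hy hle => le_antisymm hle (hmax' hy hle)
    refine ⟨m, hmT.1, hmT.2, fun y hy hmy => ?_⟩
    have hyT : y ∈ {v ∈ S | x <+: v} := ⟨hy, hmT.2.trans hmy⟩
    have := hmax y hyT hmy.length_le
    rw [hmy.eq_of_length this]

lemma relmap_pre {A : Type} (v : Fin 2 → (List A ⊕ {S : Set (List A) // IsMultichain S})) :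
    Language.Structure.RelMap (L := msoLang prefLang)
      (Sum.inl PrefRel.pre : prefLang.Relations 2 ⊕ MSORel 2) v ↔
      ∃ a b : List A, v 0 = Sum.inl a ∧ v 1 = Sum.inl b ∧ a <+: b := by
  show (∃ y, v = Sum.inl ∘ y ∧
      Language.Structure.RelMap (L := prefLang) PrefRel.pre y) ↔ _
  constructor
  · rintro ⟨y, rfl, hy⟩
    exact ⟨y 0, y 1, rfl, rfl, hy⟩
  · rintro ⟨a, b, h0, h1, hab⟩
    refine ⟨![a, b], funext fun i => ?_, hab⟩
    fin_cases i <;> simpa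

lemma relmap_mem {A : Type} (v : Fin 2 → (List A ⊕ {S : Set (List A) // IsMultichain S})) :
    Language.Structure.RelMap (L := msoLang prefLang)
      (Sum.inr MSORel.mem : prefLang.Relations 2 ⊕ MSORel 2) v ↔
      ∃ (a : List A) (S : {S : Set (List A) // IsMultichain S}),
        v 0 = Sum.inl a ∧ v 1 = Sum.inr S ∧ a ∈ S.val :=
  Iff.rfl

/-- finiteness of a multichain is uniformly first-order definable in the
multichain companion of `(List A, ⪯)`. -/
theorem finiteness_of_multichain_definable :
    ∃ φ : (msoLang prefLang).Formula (Fin 1),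
      ∀ (A : Type) (S : Set (List A)) (hS : IsMultichain S),
        (φ.Realize (fun _ =>
            (Sum.inr ⟨S, hS⟩ : List A ⊕ {S : Set (List A) // IsMultichain S})) ↔
          S.Finite) := by
  classical
  let preR : (msoLang prefLang).Relations 2 := Sum.inl PrefRel.pre
  let memR : (msoLang prefLang).Relations 2 := Sum.inr MSORel.mem
  refine ⟨∀' ((memR.boundedFormula₂ (&0) (Language.Term.var (Sum.inl 0))) ⟹
      ∃' ((memR.boundedFormula₂ (&1) (Language.Term.var (Sum.inl 0))) ⊓
          (preR.boundedFormula₂ (&0) (&1)) ⊓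
          ∀' ((memR.boundedFormula₂ (&2) (Language.Term.var (Sum.inl 0))) ⟹
              (preR.boundedFormula₂ (&1) (&2)) ⟹
              (preR.boundedFormula₂ (&2) (&1))))), ?_⟩
  intro A S hS
  rw [← multichain_max_iff_finite hS]
  simp only [Language.Formula.Realize, Language.BoundedFormula.realize_all,
    Language.BoundedFormula.realize_imp, Language.BoundedFormula.realize_ex,
    Language.BoundedFormula.realize_inf, Language.BoundedFormula.realize_rel₂]
  simp only [preR, memR, relmap_pre, relmap_mem, Function.comp_apply, Language.Term.realize_var,
    Sum.elim_inl, Sum.elim_inr, Matrix.cons_val_zero, Matrix.cons_val_one, Matrix.head_cons,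
    Fin.snoc]
  simp
  exact ⟨fun h x hx => by obtain ⟨m, ⟨h1, h2⟩, h3⟩ := h x hx; exact ⟨m, h1, h2, h3⟩,
    fun h x hx => by obtain ⟨m, h1, h2, h3⟩ := h x hx; exact ⟨m, ⟨h1, h2⟩, h3⟩⟩

end Paper
end
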